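/- arXiv:math/0510099 — 2 statements merged into one kernel-verified Lean document; each statement's English description precedes it below -/
import Mathlib

section
/- In any n-dimensional 2-symmetric semi-Riemannian manifold of any signature, the Riemann tensor satisfies R^{ρ}_{νλμ} ∇_ρ R_{αβγδ} + R^{ρ}_{αλμ} ∇_ν R_{ρβγδ} + R^{ρ}_{βλμ} ∇_ν R_{αργδ} + R^{ρ}_{γλμ} ∇_ν R_{αβρδ} + R^{ρ}_{δλμ} ∇_ν R_{αβγρ} = 0. -/
noncomputable section

open scoped BigOperators

/-! ## A local-coordinate framework for semi-Riemannian geometry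

A semi-Riemannian manifold is described in a local chart: points are elements of
`Pt n := Fin n → ℝ`, a rank-`q` covariant tensor field is a map
`Pt n → (Fin q → Fin n) → ℝ`, the metric `g` (with inverse `ginv`) determines the
Christoffel symbols of its Levi-Civita connection, the covariant derivative `covD`,
and the Riemann, Ricci, scalar and Weyl curvatures. -/

/-- Points of a local chart of an `n`-dimensional manifold. -/
abbrev Pt (n : ℕ) : Type := Fin n → ℝ

/-- A rank-`q` (covariant) tensor field, in the chart. -/
abbrev Tensor (n q : ℕ) : Type := Pt n → (Fin q → Fin n) → ℝ

/-- Partial derivative of a scalar field in the `i`-th coordinate direction. -/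
def pd {n : ℕ} (i : Fin n) (f : Pt n → ℝ) (x : Pt n) : ℝ :=
  fderiv ℝ f x (Pi.single i 1)

/-- `g` is a smooth metric of arbitrary signature, with (smooth) inverse `ginv`. -/
def IsMetric {n : ℕ} (g ginv : Pt n → Fin n → Fin n → ℝ) : Prop :=
  (∀ x μ ν, g x μ ν = g x ν μ) ∧
  (∀ μ ν, ContDiff ℝ (⊤ : ℕ∞) fun x => g x μ ν) ∧
  (∀ μ ν, ContDiff ℝ (⊤ : ℕ∞) fun x => ginv x μ ν) ∧
  (∀ x μ ν, (∑ ρ, ginv x μ ρ * g x ρ ν) = if μ = ν then (1 : ℝ) else 0)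

/-- The metric `g` has Lorentzian signature `(-,+,…,+)`: at every point there is a
frame in which it takes the form `diag (-1, 1, …, 1)`. -/
def IsLorentzian {n : ℕ} (g : Pt n → Fin n → Fin n → ℝ) : Prop :=
  ∀ x, ∃ e : Fin n → Fin n → ℝ, ∀ μ ν : Fin n,
    (∑ α, ∑ β, g x α β * e μ α * e ν β) =
      if μ = ν then (if μ.val = 0 then (-1 : ℝ) else 1) else 0

/-- Christoffel symbols `Γ^α_{βγ}` of the Levi-Civita connection of `g`. -/
def christoffel {n : ℕ} (g ginv : Pt n → Fin n → Fin n → ℝ) (x : Pt n) (α β γ : Fin n) : ℝ :=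
  (1 / 2) * ∑ ρ, ginv x α ρ *
    (pd β (fun y => g y ρ γ) x + pd γ (fun y => g y ρ β) x - pd ρ (fun y => g y β γ) x)

/-- Covariant derivative of a rank-`q` covariant tensor field:
`(covD T)_{λ α₁ … α_q} = ∇_λ T_{α₁ … α_q}`; the derivative index comes first. -/
def covD {n q : ℕ} (g ginv : Pt n → Fin n → Fin n → ℝ) (T : Tensor n q) :
    Tensor n (q + 1) := fun x idx =>
  pd (idx 0) (fun y => T y fun i => idx i.succ) x -
    ∑ i : Fin q, ∑ ρ, christoffel g ginv x ρ (idx 0) (idx i.succ) *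
      T x (Function.update (fun j => idx j.succ) i ρ)

/-- Covariant derivative `∇_λ k^μ` of a vector field `k^μ`. -/
def covDVec {n : ℕ} (g ginv : Pt n → Fin n → Fin n → ℝ) (k : Pt n → Fin n → ℝ)
    (x : Pt n) (lam μ : Fin n) : ℝ :=
  pd lam (fun y => k y μ) x + ∑ ρ, christoffel g ginv x μ lam ρ * k x ρ

/-- Riemann curvature tensor `R^α_{βγδ}` of the Levi-Civita connection of `g`. -/
def riemannUp {n : ℕ} (g ginv : Pt n → Fin n → Fin n → ℝ) (x : Pt n) (α β γ δ : Fin n) : ℝ :=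
  pd γ (fun y => christoffel g ginv y α δ β) x - pd δ (fun y => christoffel g ginv y α γ β) x +
    ∑ ρ, (christoffel g ginv x α γ ρ * christoffel g ginv x ρ δ β -
          christoffel g ginv x α δ ρ * christoffel g ginv x ρ γ β)

/-- Fully covariant Riemann tensor `R_{αβγδ} = g_{αρ} R^ρ_{βγδ}`. -/
def riemann {n : ℕ} (g ginv : Pt n → Fin n → Fin n → ℝ) : Tensor n 4 := fun x idx =>
  ∑ ρ, g x (idx 0) ρ * riemannUp g ginv x ρ (idx 1) (idx 2) (idx 3)

/-- Ricci tensor `R_{μν} = R^ρ_{μρν}`. -/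
def ricci {n : ℕ} (g ginv : Pt n → Fin n → Fin n → ℝ) : Tensor n 2 := fun x idx =>
  ∑ ρ, riemannUp g ginv x ρ (idx 0) ρ (idx 1)

/-- Scalar curvature `R = g^{μν} R_{μν}`. -/
def scalarCurv {n : ℕ} (g ginv : Pt n → Fin n → Fin n → ℝ) (x : Pt n) : ℝ :=
  ∑ μ, ∑ ν, ginv x μ ν * ricci g ginv x ![μ, ν]

/-- Weyl conformal tensor `C_{αβλμ}`, defined through the standard decomposition
`R_{αβλμ} = C_{αβλμ} + (2/(n-2)) (R_{α[λ} g_{μ]β} - R_{β[λ} g_{μ]α})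
 - (R/((n-1)(n-2))) (g_{αλ} g_{βμ} - g_{αμ} g_{βλ})`. -/
def weyl {n : ℕ} (g ginv : Pt n → Fin n → Fin n → ℝ) : Tensor n 4 := fun x idx =>
  riemann g ginv x idx -
    (2 / ((n : ℝ) - 2)) *
      ((ricci g ginv x ![idx 0, idx 2] * g x (idx 3) (idx 1) -
        ricci g ginv x ![idx 0, idx 3] * g x (idx 2) (idx 1)) / 2 -
       (ricci g ginv x ![idx 1, idx 2] * g x (idx 3) (idx 0) -
        ricci g ginv x ![idx 1, idx 3] * g x (idx 2) (idx 0)) / 2) +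
    (scalarCurv g ginv x / (((n : ℝ) - 1) * ((n : ℝ) - 2))) *
      (g x (idx 0) (idx 2) * g x (idx 1) (idx 3) - g x (idx 0) (idx 3) * g x (idx 1) (idx 2))

/-- Second-order symmetry (2-symmetry): `∇_μ ∇_ν R_{αβγδ} = 0` everywhere. -/
def TwoSymmetric {n : ℕ} (g ginv : Pt n → Fin n → Fin n → ℝ) : Prop :=
  ∀ x idx, covD g ginv (covD g ginv (riemann g ginv)) x idx = 0

/-- 2-symmetry on a set `D`: `∇_μ ∇_ν R_{αβγδ} = 0` on `D`. -/
def TwoSymmetricOn {n : ℕ} (g ginv : Pt n → Fin n → Fin n → ℝ) (D : Set (Pt n)) : Prop :=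
  ∀ x ∈ D, ∀ idx, covD g ginv (covD g ginv (riemann g ginv)) x idx = 0

/-- Semi-symmetry: `∇_[μ ∇_ν] R_{αβγδ} = 0` everywhere. -/
def SemiSymmetric {n : ℕ} (g ginv : Pt n → Fin n → Fin n → ℝ) : Prop :=
  ∀ x (μ ν α β γ δ : Fin n),
    covD g ginv (covD g ginv (riemann g ginv)) x ![μ, ν, α, β, γ, δ] =
    covD g ginv (covD g ginv (riemann g ginv)) x ![ν, μ, α, β, γ, δ]

/-- `p` is a generic point: the Riemann tensor at `p`, viewed as the endomorphism
`ω_{γδ} ↦ R^{αβ}_{γδ} ω_{γδ}` of the space of 2-forms at `p`, is non-singular. -/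
def GenericAt {n : ℕ} (g ginv : Pt n → Fin n → Fin n → ℝ) (p : Pt n) : Prop :=
  ∀ ω : Fin n → Fin n → ℝ, (∀ γ δ, ω γ δ = -ω δ γ) →
    (∀ α β, (∑ γ, ∑ δ, (∑ σ, ginv p β σ * riemannUp g ginv p α σ γ δ) * ω γ δ) = 0) →
    ω = 0

/-- `k` is a parallel null (nowhere zero) vector field on `D`. -/
def ParallelNullVectorFieldOn {n : ℕ} (g ginv : Pt n → Fin n → Fin n → ℝ)
    (D : Set (Pt n)) (k : Pt n → Fin n → ℝ) : Prop :=
  (∀ x ∈ D, ∀ lam μ, covDVec g ginv k x lam μ = 0) ∧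
  (∀ x ∈ D, (∑ μ, ∑ ν, g x μ ν * k x μ * k x ν) = 0) ∧
  (∀ x ∈ D, k x ≠ 0)

/-- Pullback metric of `g` along a coordinate change `φ`. -/
def pullback {n : ℕ} (g : Pt n → Fin n → Fin n → ℝ) (φ : Pt n → Pt n)
    (x : Pt n) (μ ν : Fin n) : ℝ :=
  ∑ α, ∑ β, g (φ x) α β * pd μ (fun y => φ y α) x * pd ν (fun y => φ y β) x

/-- `k`-th iterated covariant derivative of a rank-`q` tensor field. -/
def covDIter {n : ℕ} (g ginv : Pt n → Fin n → Fin n → ℝ) (q : ℕ) :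
    (k : ℕ) → Tensor n q → Tensor n (q + k)
  | 0, T => T
  | k + 1, T => covD g ginv (covDIter g ginv q k T)

/-- Totally antisymmetric Levi-Civita symbol. -/
def lcSymbol {n : ℕ} (idx : Fin n → Fin n) : ℝ :=
  if h : Function.Bijective idx then ((Equiv.Perm.sign (Equiv.ofBijective idx h) : ℤ) : ℝ) else 0

/-- The metric volume element `n`-form `√|det g| ε_{μ₁…μ_n}`. -/
def volForm {n : ℕ} (g : Pt n → Fin n → Fin n → ℝ) : Tensor n n := fun x idx =>
  Real.sqrt |Matrix.det (Matrix.of (g x))| * lcSymbol idx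

/-- Formal curvature invariants of rank `q`: tensor fields constructed polynomially
from the metric, its inverse, the Riemann tensor, the volume `n`-form, covariant
derivatives, tensor products, (metric) contractions, index permutations, sums and
scalar multiples. -/
inductive TExpr (n : ℕ) : ℕ → Type where
  | metric : TExpr n 2
  | inv : TExpr n 2
  | riem : TExpr n 4
  | eps : TExpr n n
  | cd : {q : ℕ} → TExpr n q → TExpr n (q + 1)
  | tprod : {q r : ℕ} → TExpr n q → TExpr n r → TExpr n (q + r)
  | contr : {q : ℕ} → TExpr n (q + 2) → TExpr n q
  | permute : {q : ℕ} → Equiv.Perm (Fin q) → TExpr n q → TExpr n q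
  | add : {q : ℕ} → TExpr n q → TExpr n q → TExpr n q
  | smul : {q : ℕ} → ℝ → TExpr n q → TExpr n q

/-- Evaluation of a formal curvature invariant as a tensor field. -/
def TExpr.eval {n : ℕ} (g ginv : Pt n → Fin n → Fin n → ℝ) :
    {q : ℕ} → TExpr n q → Tensor n q
  | _, .metric => fun x idx => g x (idx 0) (idx 1)
  | _, .inv => fun x idx => ginv x (idx 0) (idx 1)
  | _, .riem => riemann g ginv
  | _, .eps => volForm g
  | _, .cd e => covD g ginv (TExpr.eval g ginv e)
  | _, .tprod e₁ e₂ => fun x idx =>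
      TExpr.eval g ginv e₁ x (fun i => idx (Fin.castAdd _ i)) *
      TExpr.eval g ginv e₂ x (fun i => idx (Fin.natAdd _ i))
  | _, .contr e => fun x idx =>
      ∑ ρ, ∑ σ, ginv x ρ σ * TExpr.eval g ginv e x (Fin.cons ρ (Fin.cons σ idx))
  | _, .permute π e => fun x idx => TExpr.eval g ginv e x (idx ∘ π)
  | _, .add e₁ e₂ => fun x idx => TExpr.eval g ginv e₁ x idx + TExpr.eval g ginv e₂ x idx
  | _, .smul c e => fun x idx => c * TExpr.eval g ginv e x idx

/-- `e.HasOrderDeg m d`: the invariant `e` is homogeneous of order `m` (number of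
covariant derivatives in each term) and degree `d` (number of Riemann factors in
each term). -/
inductive TExpr.HasOrderDeg {n : ℕ} : {q : ℕ} → TExpr n q → ℕ → ℕ → Prop where
  | metric : HasOrderDeg .metric 0 0
  | inv : HasOrderDeg .inv 0 0
  | riem : HasOrderDeg .riem 0 1
  | eps : HasOrderDeg .eps 0 0
  | cd {q : ℕ} {e : TExpr n q} {m d : ℕ} : HasOrderDeg e m d → HasOrderDeg e.cd (m + 1) d
  | tprod {q r : ℕ} {e₁ : TExpr n q} {e₂ : TExpr n r} {m₁ d₁ m₂ d₂ : ℕ} :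
      HasOrderDeg e₁ m₁ d₁ → HasOrderDeg e₂ m₂ d₂ →
      HasOrderDeg (e₁.tprod e₂) (m₁ + m₂) (d₁ + d₂)
  | contr {q : ℕ} {e : TExpr n (q + 2)} {m d : ℕ} : HasOrderDeg e m d → HasOrderDeg e.contr m d
  | permute {q : ℕ} {π : Equiv.Perm (Fin q)} {e : TExpr n q} {m d : ℕ} :
      HasOrderDeg e m d → HasOrderDeg (e.permute π) m d
  | add {q : ℕ} {e₁ e₂ : TExpr n q} {m d : ℕ} :
      HasOrderDeg e₁ m d → HasOrderDeg e₂ m d → HasOrderDeg (e₁.add e₂) m d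
  | smul {q : ℕ} {c : ℝ} {e : TExpr n q} {m d : ℕ} :
      HasOrderDeg e m d → HasOrderDeg (e.smul c) m d

/-- `P` is the parallel-transport operator along the curve `γ`. -/
def IsTransportAlong {n : ℕ} (g ginv : Pt n → Fin n → Fin n → ℝ)
    (γ : ℝ → Pt n) (P : ℝ → Fin n → Fin n → ℝ) : Prop :=
  (∀ μ ν, P 0 μ ν = if μ = ν then (1 : ℝ) else 0) ∧
  ∀ t μ ν, HasDerivAt (fun s => P s μ ν)
    (-∑ lam, ∑ ρ, christoffel g ginv (γ t) μ lam ρ * deriv (fun s => γ s lam) t * P t ρ ν) t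

/-- The subspace `W` of the tangent space at `p` is invariant under the holonomy
group of `(D, g)` at `p` (parallel transport around smooth loops in `D` based at `p`). -/
def HolonomyInvariantAt {n : ℕ} (g ginv : Pt n → Fin n → Fin n → ℝ) (D : Set (Pt n))
    (p : Pt n) (W : Submodule ℝ (Fin n → ℝ)) : Prop :=
  ∀ γ : ℝ → Pt n, ContDiff ℝ (⊤ : ℕ∞) γ → (∀ t, γ t ∈ D) → γ 0 = p → γ 1 = p →
    ∀ P, IsTransportAlong g ginv γ P →
      ∀ w ∈ W, (fun μ => ∑ ν, P 1 μ ν * w ν) ∈ W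

/-- The holonomy group of `(D,g)` at `p` is reducible: it leaves invariant a
non-trivial subspace of the tangent space. -/
def ReducibleAt {n : ℕ} (g ginv : Pt n → Fin n → Fin n → ℝ) (D : Set (Pt n))
    (p : Pt n) : Prop :=
  ∃ W : Submodule ℝ (Fin n → ℝ), W ≠ ⊥ ∧ W ≠ ⊤ ∧ HolonomyInvariantAt g ginv D p W

/-- The holonomy group of `(D,g)` at `p` is non-degenerately reducible: it leaves
invariant a non-trivial subspace on which `g` is non-degenerate. -/
def NonDegReducibleAt {n : ℕ} (g ginv : Pt n → Fin n → Fin n → ℝ) (D : Set (Pt n))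
    (p : Pt n) : Prop :=
  ∃ W : Submodule ℝ (Fin n → ℝ), W ≠ ⊥ ∧ W ≠ ⊤ ∧ HolonomyInvariantAt g ginv D p W ∧
    ∀ w ∈ W, (∀ u ∈ W, (∑ μ, ∑ ν, g p μ ν * w μ * u ν) = 0) → w = 0


lemma contDiff_pd {n : ℕ} {f : Pt n → ℝ} (hf : ContDiff ℝ (⊤ : ℕ∞) f) (i : Fin n) :
    ContDiff ℝ (⊤ : ℕ∞) (fun x => pd i f x) := by
  have h1 : ContDiff ℝ (⊤ : ℕ∞) (fderiv ℝ f) := hf.fderiv_right (by exact_mod_cast le_top)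
  exact (ContinuousLinearMap.apply ℝ ℝ (Pi.single i 1)).contDiff.comp h1

lemma pd_mul {n : ℕ} (i : Fin n) (x : Pt n) (f g : Pt n → ℝ)
    (hf : DifferentiableAt ℝ f x) (hg : DifferentiableAt ℝ g x) :
    pd i (fun y => f y * g y) x = pd i f x * g x + f x * pd i g x := by
  have h : fderiv ℝ (fun y => f y * g y) x = f x • fderiv ℝ g x + g x • fderiv ℝ f x :=
    (hf.hasFDerivAt.mul hg.hasFDerivAt).fderiv
  simp only [pd, h, ContinuousLinearMap.add_apply, ContinuousLinearMap.smul_apply,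
    smul_eq_mul]
  ring

lemma pd_comm {n : ℕ} {f : Pt n → ℝ} (hf : ContDiff ℝ (⊤ : ℕ∞) f) (i j : Fin n) (x : Pt n) :
    pd i (fun y => pd j f y) x = pd j (fun y => pd i f y) x := by
  have h1 : ContDiff ℝ (⊤ : ℕ∞) (fderiv ℝ f) := hf.fderiv_right (by exact_mod_cast le_top)
  have hd2 : ∀ y, HasFDerivAt f (fderiv ℝ f y) y := fun y =>
    (hf.differentiable (by simp) y).hasFDerivAt
  have hd3 : HasFDerivAt (fderiv ℝ f) (fderiv ℝ (fderiv ℝ f) x) x :=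
    (h1.differentiable (by simp) x).hasFDerivAt
  have hsymm := second_derivative_symmetric hd2 hd3 (Pi.single i 1) (Pi.single j 1)
  have key : ∀ v : Pt n, pd i (fun y => fderiv ℝ f y v) x
      = fderiv ℝ (fderiv ℝ f) x (Pi.single i 1) v := by
    intro v
    have hc := (ContinuousLinearMap.apply ℝ ℝ v).hasFDerivAt.comp x hd3
    have e := hc.fderiv
    simp only [pd]
    rw [show (fun y => fderiv ℝ f y v) = (⇑(ContinuousLinearMap.apply ℝ ℝ v) ∘ fderiv ℝ f)
      from rfl, e]
    simp
  have key' : ∀ v : Pt n, pd j (fun y => fderiv ℝ f y v) x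
      = fderiv ℝ (fderiv ℝ f) x (Pi.single j 1) v := by
    intro v
    have hc := (ContinuousLinearMap.apply ℝ ℝ v).hasFDerivAt.comp x hd3
    have e := hc.fderiv
    simp only [pd]
    rw [show (fun y => fderiv ℝ f y v) = (⇑(ContinuousLinearMap.apply ℝ ℝ v) ∘ fderiv ℝ f)
      from rfl, e]
    simp
  calc pd i (fun y => pd j f y) x = pd i (fun y => fderiv ℝ f y (Pi.single j 1)) x := rfl
    _ = fderiv ℝ (fderiv ℝ f) x (Pi.single i 1) (Pi.single j 1) := key _
    _ = fderiv ℝ (fderiv ℝ f) x (Pi.single j 1) (Pi.single i 1) := hsymm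
    _ = pd j (fun y => fderiv ℝ f y (Pi.single i 1)) x := (key' _).symm
    _ = pd j (fun y => pd i f y) x := rfl

lemma pd_five_sums {n : ℕ} (i : Fin n) (x : Pt n) (f0 f1 f2 f3 f4 : Fin n → Pt n → ℝ)
    (h0 : ∀ ρ (y : Pt n), DifferentiableAt ℝ (f0 ρ) y)
    (h1 : ∀ ρ (y : Pt n), DifferentiableAt ℝ (f1 ρ) y)
    (h2 : ∀ ρ (y : Pt n), DifferentiableAt ℝ (f2 ρ) y)
    (h3 : ∀ ρ (y : Pt n), DifferentiableAt ℝ (f3 ρ) y)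
    (h4 : ∀ ρ (y : Pt n), DifferentiableAt ℝ (f4 ρ) y) :
    pd i (fun y => (∑ ρ, f0 ρ y) + (∑ ρ, f1 ρ y) + (∑ ρ, f2 ρ y) + (∑ ρ, f3 ρ y) +
      (∑ ρ, f4 ρ y)) x
    = (∑ ρ, pd i (f0 ρ) x) + (∑ ρ, pd i (f1 ρ) x) + (∑ ρ, pd i (f2 ρ) x) +
      (∑ ρ, pd i (f3 ρ) x) + (∑ ρ, pd i (f4 ρ) x) := by
  have H0 : HasFDerivAt (fun y => ∑ ρ, f0 ρ y) (∑ ρ, fderiv ℝ (f0 ρ) x) x :=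
    HasFDerivAt.fun_sum fun ρ _ => (h0 ρ x).hasFDerivAt
  have H1 : HasFDerivAt (fun y => ∑ ρ, f1 ρ y) (∑ ρ, fderiv ℝ (f1 ρ) x) x :=
    HasFDerivAt.fun_sum fun ρ _ => (h1 ρ x).hasFDerivAt
  have H2 : HasFDerivAt (fun y => ∑ ρ, f2 ρ y) (∑ ρ, fderiv ℝ (f2 ρ) x) x :=
    HasFDerivAt.fun_sum fun ρ _ => (h2 ρ x).hasFDerivAt
  have H3 : HasFDerivAt (fun y => ∑ ρ, f3 ρ y) (∑ ρ, fderiv ℝ (f3 ρ) x) x :=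
    HasFDerivAt.fun_sum fun ρ _ => (h3 ρ x).hasFDerivAt
  have H4 : HasFDerivAt (fun y => ∑ ρ, f4 ρ y) (∑ ρ, fderiv ℝ (f4 ρ) x) x :=
    HasFDerivAt.fun_sum fun ρ _ => (h4 ρ x).hasFDerivAt
  have H := (((H0.fun_add H1).fun_add H2).fun_add H3).fun_add H4
  simp only [pd, H.fderiv, ContinuousLinearMap.add_apply, ContinuousLinearMap.sum_apply]


set_option maxHeartbeats 4000000 in
lemma ricci5 {n : ℕ} (G : Pt n → Fin n → Fin n → Fin n → ℝ)
    (T : Pt n → Fin n → Fin n → Fin n → Fin n → Fin n → ℝ)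
    (hG : ∀ a b c, ContDiff ℝ (⊤ : ℕ∞) fun x => G x a b c)
    (hT : ∀ b0 b1 b2 b3 b4, ContDiff ℝ (⊤ : ℕ∞) fun x => T x b0 b1 b2 b3 b4)
    (hH : ∀ (x : Pt n) (lam b0 b1 b2 b3 b4 : Fin n),
      pd lam (fun y => T y b0 b1 b2 b3 b4) x =
        (∑ ρ, G x ρ lam b0 * T x ρ b1 b2 b3 b4) + (∑ ρ, G x ρ lam b1 * T x b0 ρ b2 b3 b4) + (∑ ρ, G x ρ lam b2 * T x b0 b1 ρ b3 b4) + (∑ ρ, G x ρ lam b3 * T x b0 b1 b2 ρ b4) + (∑ ρ, G x ρ lam b4 * T x b0 b1 b2 b3 ρ)) :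
    ∀ (x : Pt n) (lam mu a0 a1 a2 a3 a4 : Fin n),
      (∑ ρ, (pd lam (fun y => G y ρ mu a0) x - pd mu (fun y => G y ρ lam a0) x + ∑ σ, (G x ρ lam σ * G x σ mu a0 - G x ρ mu σ * G x σ lam a0)) * T x ρ a1 a2 a3 a4) + (∑ ρ, (pd lam (fun y => G y ρ mu a1) x - pd mu (fun y => G y ρ lam a1) x + ∑ σ, (G x ρ lam σ * G x σ mu a1 - G x ρ mu σ * G x σ lam a1)) * T x a0 ρ a2 a3 a4) + (∑ ρ, (pd lam (fun y => G y ρ mu a2) x - pd mu (fun y => G y ρ lam a2) x + ∑ σ, (G x ρ lam σ * G x σ mu a2 - G x ρ mu σ * G x σ lam a2)) * T x a0 a1 ρ a3 a4) + (∑ ρ, (pd lam (fun y => G y ρ mu a3) x - pd mu (fun y => G y ρ lam a3) x + ∑ σ, (G x ρ lam σ * G x σ mu a3 - G x ρ mu σ * G x σ lam a3)) * T x a0 a1 a2 ρ a4) + (∑ ρ, (pd lam (fun y => G y ρ mu a4) x - pd mu (fun y => G y ρ lam a4) x + ∑ σ, (G x ρ lam σ * G x σ mu a4 - G x ρ mu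 σ * G x σ lam a4)) * T x a0 a1 a2 a3 ρ) = 0 := by
  intro x lam mu a0 a1 a2 a3 a4
  have dG : ∀ (a b c : Fin n) (y : Pt n), DifferentiableAt ℝ (fun x => G x a b c) y :=
    fun a b c y => ((hG a b c).differentiable (by simp)).differentiableAt
  have dT : ∀ (b0 b1 b2 b3 b4 : Fin n) (y : Pt n),
      DifferentiableAt ℝ (fun x => T x b0 b1 b2 b3 b4) y :=
    fun b0 b1 b2 b3 b4 y =>
      ((hT b0 b1 b2 b3 b4).differentiable (by simp)).differentiableAt
  have step2 : ∀ κ1 κ2 : Fin n,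
      pd κ2 (fun y => pd κ1 (fun z => T z a0 a1 a2 a3 a4) y) x = 
      (∑ ρ, (pd κ2 (fun y => G y ρ κ1 a0) x * T x ρ a1 a2 a3 a4 + G x ρ κ1 a0 * ((∑ σ, G x σ κ2 ρ * T x σ a1 a2 a3 a4) + (∑ σ, G x σ κ2 a1 * T x ρ σ a2 a3 a4) + (∑ σ, G x σ κ2 a2 * T x ρ a1 σ a3 a4) + (∑ σ, G x σ κ2 a3 * T x ρ a1 a2 σ a4) + (∑ σ, G x σ κ2 a4 * T x ρ a1 a2 a3 σ)))) + (∑ ρ, (pd κ2 (fun y => G y ρ κ1 a1) x * T x a0 ρ a2 a3 a4 + G x ρ κ1 a1 * ((∑ σ, G x σ κ2 a0 * T x σ ρ a2 a3 a4) + (∑ σ, G x σ κ2 ρ * T x a0 σ a2 a3 a4) + (∑ σ, G x σ κ2 a2 * T x a0 ρ σ a3 a4) + (∑ σ, G x σ κ2 a3 * T x a0 ρ a2 σ a4) + (∑ σ, G x σ κ2 a4 * T x a0 ρ a2 a3 σ)))) + (∑ ρ, (pd κ2 (fun y => G y ρ κ1 a2) x * T x a0 a1 ρ a3 a4 + G x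 ρ κ1 a2 * ((∑ σ, G x σ κ2 a0 * T x σ a1 ρ a3 a4) + (∑ σ, G x σ κ2 a1 * T x a0 σ ρ a3 a4) + (∑ σ, G x σ κ2 ρ * T x a0 a1 σ a3 a4) + (∑ σ, G x σ κ2 a3 * T x a0 a1 ρ σ a4) + (∑ σ, G x σ κ2 a4 * T x a0 a1 ρ a3 σ)))) + (∑ ρ, (pd κ2 (fun y => G y ρ κ1 a3) x * T x a0 a1 a2 ρ a4 + G x ρ κ1 a3 * ((∑ σ, G x σ κ2 a0 * T x σ a1 a2 ρ a4) + (∑ σ, G x σ κ2 a1 * T x a0 σ a2 ρ a4) + (∑ σ, G x σ κ2 a2 * T x a0 a1 σ ρ a4) + (∑ σ, G x σ κ2 ρ * T x a0 a1 a2 σ a4) + (∑ σ, G x σ κ2 a4 * T x a0 a1 a2 ρ σ)))) + (∑ ρ, (pd κ2 (fun y => G y ρ κ1 a4) x * T x a0 a1 a2 a3 ρ + G x ρ κ1 a4 * ((∑ σ, G x σ κ2 a0 * T x σ a1 a2 a3 ρ) + (∑ σ, G x σ κ2 a1 * T x a0 σ a2 a3 ρ) + (∑ σ, G x σ κ2 a2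 * T x a0 a1 σ a3 ρ) + (∑ σ, G x σ κ2 a3 * T x a0 a1 a2 σ ρ) + (∑ σ, G x σ κ2 ρ * T x a0 a1 a2 a3 σ)))) := by
    intro κ1 κ2
    have e1 : (fun y => pd κ1 (fun z => T z a0 a1 a2 a3 a4) y) =
        fun y => (∑ ρ, G y ρ κ1 a0 * T y ρ a1 a2 a3 a4) + (∑ ρ, G y ρ κ1 a1 * T y a0 ρ a2 a3 a4) + (∑ ρ, G y ρ κ1 a2 * T y a0 a1 ρ a3 a4) + (∑ ρ, G y ρ κ1 a3 * T y a0 a1 a2 ρ a4) + (∑ ρ, G y ρ κ1 a4 * T y a0 a1 a2 a3 ρ) :=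
      funext fun y => hH y κ1 a0 a1 a2 a3 a4
    have hd0 : ∀ (ρ : Fin n) (y : Pt n),
        DifferentiableAt ℝ (fun y => G y ρ κ1 a0 * T y ρ a1 a2 a3 a4) y :=
      fun ρ y => (dG ρ κ1 a0 y).mul (dT ρ a1 a2 a3 a4 y)
    have hd1 : ∀ (ρ : Fin n) (y : Pt n),
        DifferentiableAt ℝ (fun y => G y ρ κ1 a1 * T y a0 ρ a2 a3 a4) y :=
      fun ρ y => (dG ρ κ1 a1 y).mul (dT a0 ρ a2 a3 a4 y)
    have hd2 : ∀ (ρ : Fin n) (y : Pt n),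
        DifferentiableAt ℝ (fun y => G y ρ κ1 a2 * T y a0 a1 ρ a3 a4) y :=
      fun ρ y => (dG ρ κ1 a2 y).mul (dT a0 a1 ρ a3 a4 y)
    have hd3 : ∀ (ρ : Fin n) (y : Pt n),
        DifferentiableAt ℝ (fun y => G y ρ κ1 a3 * T y a0 a1 a2 ρ a4) y :=
      fun ρ y => (dG ρ κ1 a3 y).mul (dT a0 a1 a2 ρ a4 y)
    have hd4 : ∀ (ρ : Fin n) (y : Pt n),
        DifferentiableAt ℝ (fun y => G y ρ κ1 a4 * T y a0 a1 a2 a3 ρ) y :=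
      fun ρ y => (dG ρ κ1 a4 y).mul (dT a0 a1 a2 a3 ρ y)
    have s0 : (∑ ρ, pd κ2 (fun y => G y ρ κ1 a0 * T y ρ a1 a2 a3 a4) x) =
        ∑ ρ, (pd κ2 (fun y => G y ρ κ1 a0) x * T x ρ a1 a2 a3 a4 + G x ρ κ1 a0 * ((∑ σ, G x σ κ2 ρ * T x σ a1 a2 a3 a4) + (∑ σ, G x σ κ2 a1 * T x ρ σ a2 a3 a4) + (∑ σ, G x σ κ2 a2 * T x ρ a1 σ a3 a4) + (∑ σ, G x σ κ2 a3 * T x ρ a1 a2 σ a4) + (∑ σ, G x σ κ2 a4 * T x ρ a1 a2 a3 σ))) :=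
      Finset.sum_congr rfl fun ρ _ => by
        rw [pd_mul κ2 x _ _ (dG ρ κ1 a0 x) (dT ρ a1 a2 a3 a4 x), hH x κ2 ρ a1 a2 a3 a4]
    have s1 : (∑ ρ, pd κ2 (fun y => G y ρ κ1 a1 * T y a0 ρ a2 a3 a4) x) =
        ∑ ρ, (pd κ2 (fun y => G y ρ κ1 a1) x * T x a0 ρ a2 a3 a4 + G x ρ κ1 a1 * ((∑ σ, G x σ κ2 a0 * T x σ ρ a2 a3 a4) + (∑ σ, G x σ κ2 ρ * T x a0 σ a2 a3 a4) + (∑ σ, G x σ κ2 a2 * T x a0 ρ σ a3 a4) + (∑ σ, G x σ κ2 a3 * T x a0 ρ a2 σ a4) + (∑ σ, G x σ κ2 a4 * T x a0 ρ a2 a3 σ))) :=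
      Finset.sum_congr rfl fun ρ _ => by
        rw [pd_mul κ2 x _ _ (dG ρ κ1 a1 x) (dT a0 ρ a2 a3 a4 x), hH x κ2 a0 ρ a2 a3 a4]
    have s2 : (∑ ρ, pd κ2 (fun y => G y ρ κ1 a2 * T y a0 a1 ρ a3 a4) x) =
        ∑ ρ, (pd κ2 (fun y => G y ρ κ1 a2) x * T x a0 a1 ρ a3 a4 + G x ρ κ1 a2 * ((∑ σ, G x σ κ2 a0 * T x σ a1 ρ a3 a4) + (∑ σ, G x σ κ2 a1 * T x a0 σ ρ a3 a4) + (∑ σ, G x σ κ2 ρ * T x a0 a1 σ a3 a4) + (∑ σ, G x σ κ2 a3 * T x a0 a1 ρ σ a4) + (∑ σ, G x σ κ2 a4 * T x a0 a1 ρ a3 σ))) :=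
      Finset.sum_congr rfl fun ρ _ => by
        rw [pd_mul κ2 x _ _ (dG ρ κ1 a2 x) (dT a0 a1 ρ a3 a4 x), hH x κ2 a0 a1 ρ a3 a4]
    have s3 : (∑ ρ, pd κ2 (fun y => G y ρ κ1 a3 * T y a0 a1 a2 ρ a4) x) =
        ∑ ρ, (pd κ2 (fun y => G y ρ κ1 a3) x * T x a0 a1 a2 ρ a4 + G x ρ κ1 a3 * ((∑ σ, G x σ κ2 a0 * T x σ a1 a2 ρ a4) + (∑ σ, G x σ κ2 a1 * T x a0 σ a2 ρ a4) + (∑ σ, G x σ κ2 a2 * T x a0 a1 σ ρ a4) + (∑ σ, G x σ κ2 ρ * T x a0 a1 a2 σ a4) + (∑ σ, G x σ κ2 a4 * T x a0 a1 a2 ρ σ))) :=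
      Finset.sum_congr rfl fun ρ _ => by
        rw [pd_mul κ2 x _ _ (dG ρ κ1 a3 x) (dT a0 a1 a2 ρ a4 x), hH x κ2 a0 a1 a2 ρ a4]
    have s4 : (∑ ρ, pd κ2 (fun y => G y ρ κ1 a4 * T y a0 a1 a2 a3 ρ) x) =
        ∑ ρ, (pd κ2 (fun y => G y ρ κ1 a4) x * T x a0 a1 a2 a3 ρ + G x ρ κ1 a4 * ((∑ σ, G x σ κ2 a0 * T x σ a1 a2 a3 ρ) + (∑ σ, G x σ κ2 a1 * T x a0 σ a2 a3 ρ) + (∑ σ, G x σ κ2 a2 * T x a0 a1 σ a3 ρ) + (∑ σ, G x σ κ2 a3 * T x a0 a1 a2 σ ρ) + (∑ σ, G x σ κ2 ρ * T x a0 a1 a2 a3 σ))) :=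
      Finset.sum_congr rfl fun ρ _ => by
        rw [pd_mul κ2 x _ _ (dG ρ κ1 a4 x) (dT a0 a1 a2 a3 ρ x), hH x κ2 a0 a1 a2 a3 ρ]
    rw [e1, pd_five_sums κ2 x _ _ _ _ _ hd0 hd1 hd2 hd3 hd4, s0, s1, s2, s3, s4]
  have E : (∑ ρ, (pd mu (fun y => G y ρ lam a0) x * T x ρ a1 a2 a3 a4 + G x ρ lam a0 * ((∑ σ, G x σ mu ρ * T x σ a1 a2 a3 a4) + (∑ σ, G x σ mu a1 * T x ρ σ a2 a3 a4) + (∑ σ, G x σ mu a2 * T x ρ a1 σ a3 a4) + (∑ σ, G x σ mu a3 * T x ρ a1 a2 σ a4) + (∑ σ, G x σ mu a4 * T x ρ a1 a2 a3 σ)))) + (∑ ρ, (pd mu (fun y => G y ρ lam a1) x * T x a0 ρ a2 a3 a4 + G x ρ lam a1 * ((∑ σ, G x σ mu a0 * T x σ ρ a2 a3 a4) + (∑ σ, G x σ mu ρ * T x a0 σ a2 a3 a4) + (∑ σ, G x σ mu a2 * T x a0 ρ σ a3 a4) + (∑ σ, G x σ mu a3 * T x a0 ρ a2 σ a4) + (∑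 σ, G x σ mu a4 * T x a0 ρ a2 a3 σ)))) + (∑ ρ, (pd mu (fun y => G y ρ lam a2) x * T x a0 a1 ρ a3 a4 + G x ρ lam a2 * ((∑ σ, G x σ mu a0 * T x σ a1 ρ a3 a4) + (∑ σ, G x σ mu a1 * T x a0 σ ρ a3 a4) + (∑ σ, G x σ mu ρ * T x a0 a1 σ a3 a4) + (∑ σ, G x σ mu a3 * T x a0 a1 ρ σ a4) + (∑ σ, G x σ mu a4 * T x a0 a1 ρ a3 σ)))) + (∑ ρ, (pd mu (fun y => G y ρ lam a3) x * T x a0 a1 a2 ρ a4 + G x ρ lam a3 * ((∑ σ, G x σ mu a0 * T x σ a1 a2 ρ a4) + (∑ σ, G x σ mu a1 * T x a0 σ a2 ρ a4) + (∑ σ, G x σ mu a2 * T x a0 a1 σ ρ a4) + (∑ σ, G x σ mu ρ * T x a0 a1 a2 σ a4) + (∑ σ, G x σ mu a4 * T x a0 a1 a2 ρ σ)))) + (∑ ρ, (pd mu (fun y => G y ρ lam a4) x * T x a0 a1 a2 a3 ρ + G x ρ lam a4 * ((∑ σ, G x σ mu a0 * T x σ a1 a2 a3 ρ) + (∑ σ,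 G x σ mu a1 * T x a0 σ a2 a3 ρ) + (∑ σ, G x σ mu a2 * T x a0 a1 σ a3 ρ) + (∑ σ, G x σ mu a3 * T x a0 a1 a2 σ ρ) + (∑ σ, G x σ mu ρ * T x a0 a1 a2 a3 σ)))) =
      (∑ ρ, (pd lam (fun y => G y ρ mu a0) x * T x ρ a1 a2 a3 a4 + G x ρ mu a0 * ((∑ σ, G x σ lam ρ * T x σ a1 a2 a3 a4) + (∑ σ, G x σ lam a1 * T x ρ σ a2 a3 a4) + (∑ σ, G x σ lam a2 * T x ρ a1 σ a3 a4) + (∑ σ, G x σ lam a3 * T x ρ a1 a2 σ a4) + (∑ σ, G x σ lam a4 * T x ρ a1 a2 a3 σ)))) + (∑ ρ, (pd lam (fun y => G y ρ mu a1) x * T x a0 ρ a2 a3 a4 + G x ρ mu a1 * ((∑ σ, G x σ lam a0 * T x σ ρ a2 a3 a4) + (∑ σ, G x σ lam ρ * T x a0 σ a2 a3 a4) + (∑ σ, G x σ lam a2 * T x a0 ρ σ a3 a4) + (∑ σ, G x σ lam a3 * T x a0 ρ a2 σ a4) + (∑ σ, G x σ lam a4 * T x a0 ρ a2 a3 σ))))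 + (∑ ρ, (pd lam (fun y => G y ρ mu a2) x * T x a0 a1 ρ a3 a4 + G x ρ mu a2 * ((∑ σ, G x σ lam a0 * T x σ a1 ρ a3 a4) + (∑ σ, G x σ lam a1 * T x a0 σ ρ a3 a4) + (∑ σ, G x σ lam ρ * T x a0 a1 σ a3 a4) + (∑ σ, G x σ lam a3 * T x a0 a1 ρ σ a4) + (∑ σ, G x σ lam a4 * T x a0 a1 ρ a3 σ)))) + (∑ ρ, (pd lam (fun y => G y ρ mu a3) x * T x a0 a1 a2 ρ a4 + G x ρ mu a3 * ((∑ σ, G x σ lam a0 * T x σ a1 a2 ρ a4) + (∑ σ, G x σ lam a1 * T x a0 σ a2 ρ a4) + (∑ σ, G x σ lam a2 * T x a0 a1 σ ρ a4) + (∑ σ, G x σ lam ρ * T x a0 a1 a2 σ a4) + (∑ σ, G x σ lam a4 * T x a0 a1 a2 ρ σ)))) + (∑ ρ, (pd lam (fun y => G y ρ mu a4) x * T x a0 a1 a2 a3 ρ + G x ρ mu a4 * ((∑ σ, G x σ lam a0 * T x σ a1 a2 a3 ρ) + (∑ σ, G x σ lam a1 * T x a0 σ a2 a3 ρ) + (∑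 σ, G x σ lam a2 * T x a0 a1 σ a3 ρ) + (∑ σ, G x σ lam a3 * T x a0 a1 a2 σ ρ) + (∑ σ, G x σ lam ρ * T x a0 a1 a2 a3 σ)))) :=
    (step2 lam mu).symm.trans ((pd_comm (hT a0 a1 a2 a3 a4) mu lam x).trans (step2 mu lam))
  have swap0 : (∑ ρ, ∑ σ, ((G x ρ mu a0 * (G x σ lam ρ * T x σ a1 a2 a3 a4) - G x ρ lam a0 * (G x σ mu ρ * T x σ a1 a2 a3 a4)) + (G x ρ mu a1 * (G x σ lam ρ * T x a0 σ a2 a3 a4) - G x ρ lam a1 * (G x σ mu ρ * T x a0 σ a2 a3 a4)) + (G x ρ mu a2 * (G x σ lam ρ * T x a0 a1 σ a3 a4) - G x ρ lam a2 * (G x σ mu ρ * T x a0 a1 σ a3 a4)) + (G x ρ mu a3 * (G x σ lam ρ * T x a0 a1 a2 σ a4) - G x ρ lam a3 * (G x σ mu ρ * T x a0 a1 a2 σ a4)) + (G x ρ mu a4 * (G x σ lam ρ * T x a0 a1 a2 a3 σ) - G x ρ lam a4 * (G x σ mu ρ * T x a0 a1 a2 a3 σ)) + G x ρ mu a0 *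 (G x σ lam a1 * T x ρ σ a2 a3 a4) + G x ρ mu a0 * (G x σ lam a2 * T x ρ a1 σ a3 a4) + G x ρ mu a0 * (G x σ lam a3 * T x ρ a1 a2 σ a4) + G x ρ mu a0 * (G x σ lam a4 * T x ρ a1 a2 a3 σ) + G x ρ mu a1 * (G x σ lam a0 * T x σ ρ a2 a3 a4) + G x ρ mu a1 * (G x σ lam a2 * T x a0 ρ σ a3 a4) + G x ρ mu a1 * (G x σ lam a3 * T x a0 ρ a2 σ a4) + G x ρ mu a1 * (G x σ lam a4 * T x a0 ρ a2 a3 σ) + G x ρ mu a2 * (G x σ lam a0 * T x σ a1 ρ a3 a4) + G x ρ mu a2 * (G x σ lam a1 * T x a0 σ ρ a3 a4) + G x ρ mu a2 * (G x σ lam a3 * T x a0 a1 ρ σ a4) + G x ρ mu a2 * (G x σ lam a4 * T x a0 a1 ρ a3 σ) + G x ρ mu a3 * (G x σ lam a0 * T x σ a1 a2 ρ a4) + G x ρ mu a3 * (G x σ lam a1 * T x a0 σ a2 ρ a4) + G x ρ mu a3 * (G x σ lam a2 * T x a0 a1 σ ρ a4) + G x ρ mu a3 * (G x σ lam a4 *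 T x a0 a1 a2 ρ σ) + G x ρ mu a4 * (G x σ lam a0 * T x σ a1 a2 a3 ρ) + G x ρ mu a4 * (G x σ lam a1 * T x a0 σ a2 a3 ρ) + G x ρ mu a4 * (G x σ lam a2 * T x a0 a1 σ a3 ρ) + G x ρ mu a4 * (G x σ lam a3 * T x a0 a1 a2 σ ρ))) =
      ∑ ρ, ∑ σ, ((G x σ mu a0 * (G x ρ lam σ * T x ρ a1 a2 a3 a4) - G x σ lam a0 * (G x ρ mu σ * T x ρ a1 a2 a3 a4)) + (G x σ mu a1 * (G x ρ lam σ * T x a0 ρ a2 a3 a4) - G x σ lam a1 * (G x ρ mu σ * T x a0 ρ a2 a3 a4)) + (G x σ mu a2 * (G x ρ lam σ * T x a0 a1 ρ a3 a4) - G x σ lam a2 * (G x ρ mu σ * T x a0 a1 ρ a3 a4)) + (G x σ mu a3 * (G x ρ lam σ * T x a0 a1 a2 ρ a4) - G x σ lam a3 * (G x ρ mu σ * T x a0 a1 a2 ρ a4)) + (G x σ mu a4 * (G x ρ lam σ * T x a0 a1 a2 a3 ρ) - G x σ lam a4 * (G x ρ mu σ * T x a0 a1 a2 a3 ρ)) +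 G x σ mu a0 * (G x ρ lam a1 * T x σ ρ a2 a3 a4) + G x σ mu a0 * (G x ρ lam a2 * T x σ a1 ρ a3 a4) + G x σ mu a0 * (G x ρ lam a3 * T x σ a1 a2 ρ a4) + G x σ mu a0 * (G x ρ lam a4 * T x σ a1 a2 a3 ρ) + G x σ mu a1 * (G x ρ lam a0 * T x ρ σ a2 a3 a4) + G x σ mu a1 * (G x ρ lam a2 * T x a0 σ ρ a3 a4) + G x σ mu a1 * (G x ρ lam a3 * T x a0 σ a2 ρ a4) + G x σ mu a1 * (G x ρ lam a4 * T x a0 σ a2 a3 ρ) + G x σ mu a2 * (G x ρ lam a0 * T x ρ a1 σ a3 a4) + G x σ mu a2 * (G x ρ lam a1 * T x a0 ρ σ a3 a4) + G x σ mu a2 * (G x ρ lam a3 * T x a0 a1 σ ρ a4) + G x σ mu a2 * (G x ρ lam a4 * T x a0 a1 σ a3 ρ) + G x σ mu a3 * (G x ρ lam a0 * T x ρ a1 a2 σ a4) + G x σ mu a3 * (G x ρ lam a1 * T x a0 ρ a2 σ a4) + G x σ mu a3 * (G x ρ lam a2 * T x a0 a1 ρ σ a4) + G x σ mu a3 * (G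 x ρ lam a4 * T x a0 a1 a2 σ ρ) + G x σ mu a4 * (G x ρ lam a0 * T x ρ a1 a2 a3 σ) + G x σ mu a4 * (G x ρ lam a1 * T x a0 ρ a2 a3 σ) + G x σ mu a4 * (G x ρ lam a2 * T x a0 a1 ρ a3 σ) + G x σ mu a4 * (G x ρ lam a3 * T x a0 a1 a2 ρ σ)) := Finset.sum_comm
  have hfin : (∑ ρ, (pd lam (fun y => G y ρ mu a0) x - pd mu (fun y => G y ρ lam a0) x + ∑ σ, (G x ρ lam σ * G x σ mu a0 - G x ρ mu σ * G x σ lam a0)) * T x ρ a1 a2 a3 a4) + (∑ ρ, (pd lam (fun y => G y ρ mu a1) x - pd mu (fun y => G y ρ lam a1) x + ∑ σ, (G x ρ lam σ * G x σ mu a1 - G x ρ mu σ * G x σ lam a1)) * T x a0 ρ a2 a3 a4) + (∑ ρ, (pd lam (fun y => G y ρ mu a2) x - pd mu (fun y => G y ρ lam a2) x + ∑ σ, (G x ρ lam σ * G x σ mu a2 - G x ρ mu σ * G x σ lam a2)) * T x a0 a1 ρ a3 a4) + (∑ ρ, (pd lam (fun y => G y ρ mu a3) x - pd mu (fun y =>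 G y ρ lam a3) x + ∑ σ, (G x ρ lam σ * G x σ mu a3 - G x ρ mu σ * G x σ lam a3)) * T x a0 a1 a2 ρ a4) + (∑ ρ, (pd lam (fun y => G y ρ mu a4) x - pd mu (fun y => G y ρ lam a4) x + ∑ σ, (G x ρ lam σ * G x σ mu a4 - G x ρ mu σ * G x σ lam a4)) * T x a0 a1 a2 a3 ρ) =
      (((∑ ρ, (pd lam (fun y => G y ρ mu a0) x * T x ρ a1 a2 a3 a4 + G x ρ mu a0 * ((∑ σ, G x σ lam ρ * T x σ a1 a2 a3 a4) + (∑ σ, G x σ lam a1 * T x ρ σ a2 a3 a4) + (∑ σ, G x σ lam a2 * T x ρ a1 σ a3 a4) + (∑ σ, G x σ lam a3 * T x ρ a1 a2 σ a4) + (∑ σ, G x σ lam a4 * T x ρ a1 a2 a3 σ)))) + (∑ ρ, (pd lam (fun y => G y ρ mu a1) x * T x a0 ρ a2 a3 a4 + G x ρ mu a1 * ((∑ σ, G x σ lam a0 * T x σ ρ a2 a3 a4) + (∑ σ, G x σ lam ρ * T x a0 σ a2 a3 a4) + (∑ σ, G x σ lam a2 * T x a0 ρ σ a3 a4) + (∑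 σ, G x σ lam a3 * T x a0 ρ a2 σ a4) + (∑ σ, G x σ lam a4 * T x a0 ρ a2 a3 σ)))) + (∑ ρ, (pd lam (fun y => G y ρ mu a2) x * T x a0 a1 ρ a3 a4 + G x ρ mu a2 * ((∑ σ, G x σ lam a0 * T x σ a1 ρ a3 a4) + (∑ σ, G x σ lam a1 * T x a0 σ ρ a3 a4) + (∑ σ, G x σ lam ρ * T x a0 a1 σ a3 a4) + (∑ σ, G x σ lam a3 * T x a0 a1 ρ σ a4) + (∑ σ, G x σ lam a4 * T x a0 a1 ρ a3 σ)))) + (∑ ρ, (pd lam (fun y => G y ρ mu a3) x * T x a0 a1 a2 ρ a4 + G x ρ mu a3 * ((∑ σ, G x σ lam a0 * T x σ a1 a2 ρ a4) + (∑ σ, G x σ lam a1 * T x a0 σ a2 ρ a4) + (∑ σ, G x σ lam a2 * T x a0 a1 σ ρ a4) + (∑ σ, G x σ lam ρ * T x a0 a1 a2 σ a4) + (∑ σ, G x σ lam a4 * T x a0 a1 a2 ρ σ)))) + (∑ ρ, (pd lam (fun y => G y ρ mu a4) x * T x a0 a1 a2 a3 ρ + G x ρ mu a4 * ((∑ σ,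 G x σ lam a0 * T x σ a1 a2 a3 ρ) + (∑ σ, G x σ lam a1 * T x a0 σ a2 a3 ρ) + (∑ σ, G x σ lam a2 * T x a0 a1 σ a3 ρ) + (∑ σ, G x σ lam a3 * T x a0 a1 a2 σ ρ) + (∑ σ, G x σ lam ρ * T x a0 a1 a2 a3 σ))))) -
       ((∑ ρ, (pd mu (fun y => G y ρ lam a0) x * T x ρ a1 a2 a3 a4 + G x ρ lam a0 * ((∑ σ, G x σ mu ρ * T x σ a1 a2 a3 a4) + (∑ σ, G x σ mu a1 * T x ρ σ a2 a3 a4) + (∑ σ, G x σ mu a2 * T x ρ a1 σ a3 a4) + (∑ σ, G x σ mu a3 * T x ρ a1 a2 σ a4) + (∑ σ, G x σ mu a4 * T x ρ a1 a2 a3 σ)))) + (∑ ρ, (pd mu (fun y => G y ρ lam a1) x * T x a0 ρ a2 a3 a4 + G x ρ lam a1 * ((∑ σ, G x σ mu a0 * T x σ ρ a2 a3 a4) + (∑ σ, G x σ mu ρ * T x a0 σ a2 a3 a4) + (∑ σ, G x σ mu a2 * T x a0 ρ σ a3 a4) + (∑ σ, G x σ mu a3 * T x a0 ρ a2 σ a4)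 + (∑ σ, G x σ mu a4 * T x a0 ρ a2 a3 σ)))) + (∑ ρ, (pd mu (fun y => G y ρ lam a2) x * T x a0 a1 ρ a3 a4 + G x ρ lam a2 * ((∑ σ, G x σ mu a0 * T x σ a1 ρ a3 a4) + (∑ σ, G x σ mu a1 * T x a0 σ ρ a3 a4) + (∑ σ, G x σ mu ρ * T x a0 a1 σ a3 a4) + (∑ σ, G x σ mu a3 * T x a0 a1 ρ σ a4) + (∑ σ, G x σ mu a4 * T x a0 a1 ρ a3 σ)))) + (∑ ρ, (pd mu (fun y => G y ρ lam a3) x * T x a0 a1 a2 ρ a4 + G x ρ lam a3 * ((∑ σ, G x σ mu a0 * T x σ a1 a2 ρ a4) + (∑ σ, G x σ mu a1 * T x a0 σ a2 ρ a4) + (∑ σ, G x σ mu a2 * T x a0 a1 σ ρ a4) + (∑ σ, G x σ mu ρ * T x a0 a1 a2 σ a4) + (∑ σ, G x σ mu a4 * T x a0 a1 a2 ρ σ)))) + (∑ ρ, (pd mu (fun y => G y ρ lam a4) x * T x a0 a1 a2 a3 ρ + G x ρ lam a4 * ((∑ σ, G x σ mu a0 * T x σ a1 a2 a3 ρ) +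 (∑ σ, G x σ mu a1 * T x a0 σ a2 a3 ρ) + (∑ σ, G x σ mu a2 * T x a0 a1 σ a3 ρ) + (∑ σ, G x σ mu a3 * T x a0 a1 a2 σ ρ) + (∑ σ, G x σ mu ρ * T x a0 a1 a2 a3 σ)))))) -
      ((∑ ρ, ∑ σ, ((G x ρ mu a0 * (G x σ lam ρ * T x σ a1 a2 a3 a4) - G x ρ lam a0 * (G x σ mu ρ * T x σ a1 a2 a3 a4)) + (G x ρ mu a1 * (G x σ lam ρ * T x a0 σ a2 a3 a4) - G x ρ lam a1 * (G x σ mu ρ * T x a0 σ a2 a3 a4)) + (G x ρ mu a2 * (G x σ lam ρ * T x a0 a1 σ a3 a4) - G x ρ lam a2 * (G x σ mu ρ * T x a0 a1 σ a3 a4)) + (G x ρ mu a3 * (G x σ lam ρ * T x a0 a1 a2 σ a4) - G x ρ lam a3 * (G x σ mu ρ * T x a0 a1 a2 σ a4)) + (G x ρ mu a4 * (G x σ lam ρ * T x a0 a1 a2 a3 σ) - G x ρ lam a4 * (G x σ mu ρ * T x a0 a1 a2 a3 σ)) + G x ρ mu a0 * (G x σ lam a1 * T x ρ σ a2 a3 a4)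 + G x ρ mu a0 * (G x σ lam a2 * T x ρ a1 σ a3 a4) + G x ρ mu a0 * (G x σ lam a3 * T x ρ a1 a2 σ a4) + G x ρ mu a0 * (G x σ lam a4 * T x ρ a1 a2 a3 σ) + G x ρ mu a1 * (G x σ lam a0 * T x σ ρ a2 a3 a4) + G x ρ mu a1 * (G x σ lam a2 * T x a0 ρ σ a3 a4) + G x ρ mu a1 * (G x σ lam a3 * T x a0 ρ a2 σ a4) + G x ρ mu a1 * (G x σ lam a4 * T x a0 ρ a2 a3 σ) + G x ρ mu a2 * (G x σ lam a0 * T x σ a1 ρ a3 a4) + G x ρ mu a2 * (G x σ lam a1 * T x a0 σ ρ a3 a4) + G x ρ mu a2 * (G x σ lam a3 * T x a0 a1 ρ σ a4) + G x ρ mu a2 * (G x σ lam a4 * T x a0 a1 ρ a3 σ) + G x ρ mu a3 * (G x σ lam a0 * T x σ a1 a2 ρ a4) + G x ρ mu a3 * (G x σ lam a1 * T x a0 σ a2 ρ a4) + G x ρ mu a3 * (G x σ lam a2 * T x a0 a1 σ ρ a4) + G x ρ mu a3 * (G x σ lam a4 * T x a0 a1 a2 ρ σ) + G x ρ mu a4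 * (G x σ lam a0 * T x σ a1 a2 a3 ρ) + G x ρ mu a4 * (G x σ lam a1 * T x a0 σ a2 a3 ρ) + G x ρ mu a4 * (G x σ lam a2 * T x a0 a1 σ a3 ρ) + G x ρ mu a4 * (G x σ lam a3 * T x a0 a1 a2 σ ρ))) -
       (∑ ρ, ∑ σ, ((G x σ mu a0 * (G x ρ lam σ * T x ρ a1 a2 a3 a4) - G x σ lam a0 * (G x ρ mu σ * T x ρ a1 a2 a3 a4)) + (G x σ mu a1 * (G x ρ lam σ * T x a0 ρ a2 a3 a4) - G x σ lam a1 * (G x ρ mu σ * T x a0 ρ a2 a3 a4)) + (G x σ mu a2 * (G x ρ lam σ * T x a0 a1 ρ a3 a4) - G x σ lam a2 * (G x ρ mu σ * T x a0 a1 ρ a3 a4)) + (G x σ mu a3 * (G x ρ lam σ * T x a0 a1 a2 ρ a4) - G x σ lam a3 * (G x ρ mu σ * T x a0 a1 a2 ρ a4)) + (G x σ mu a4 * (G x ρ lam σ * T x a0 a1 a2 a3 ρ) - G x σ lam a4 * (G x ρ mu σ * T x a0 a1 a2 a3 ρ)) + G x σ mu a0 * (G x ρ lam a1 * T x σ ρ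 a2 a3 a4) + G x σ mu a0 * (G x ρ lam a2 * T x σ a1 ρ a3 a4) + G x σ mu a0 * (G x ρ lam a3 * T x σ a1 a2 ρ a4) + G x σ mu a0 * (G x ρ lam a4 * T x σ a1 a2 a3 ρ) + G x σ mu a1 * (G x ρ lam a0 * T x ρ σ a2 a3 a4) + G x σ mu a1 * (G x ρ lam a2 * T x a0 σ ρ a3 a4) + G x σ mu a1 * (G x ρ lam a3 * T x a0 σ a2 ρ a4) + G x σ mu a1 * (G x ρ lam a4 * T x a0 σ a2 a3 ρ) + G x σ mu a2 * (G x ρ lam a0 * T x ρ a1 σ a3 a4) + G x σ mu a2 * (G x ρ lam a1 * T x a0 ρ σ a3 a4) + G x σ mu a2 * (G x ρ lam a3 * T x a0 a1 σ ρ a4) + G x σ mu a2 * (G x ρ lam a4 * T x a0 a1 σ a3 ρ) + G x σ mu a3 * (G x ρ lam a0 * T x ρ a1 a2 σ a4) + G x σ mu a3 * (G x ρ lam a1 * T x a0 ρ a2 σ a4) + G x σ mu a3 * (G x ρ lam a2 * T x a0 a1 ρ σ a4) + G x σ mu a3 * (G x ρ lam a4 * T x a0 a1 a2 σ ρ) +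 G x σ mu a4 * (G x ρ lam a0 * T x ρ a1 a2 a3 σ) + G x σ mu a4 * (G x ρ lam a1 * T x a0 ρ a2 a3 σ) + G x σ mu a4 * (G x ρ lam a2 * T x a0 a1 ρ a3 σ) + G x σ mu a4 * (G x ρ lam a3 * T x a0 a1 a2 ρ σ)))) := by
    simp only [sub_mul, add_mul, mul_add, mul_sub, Finset.sum_mul, Finset.mul_sum,
      Finset.sum_add_distrib, Finset.sum_sub_distrib, mul_comm, mul_assoc, mul_left_comm]
    ring
  rw [hfin, E, swap0, sub_self, sub_self, sub_zero]

set_option maxHeartbeats 1000000 in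
/-- In any `n`-dimensional 2-symmetric semi-Riemannian manifold of any
signature, `R^ρ_{νλμ} ∇_ρ R_{αβγδ} + R^ρ_{αλμ} ∇_ν R_{ρβγδ} + R^ρ_{βλμ} ∇_ν R_{αργδ}
+ R^ρ_{γλμ} ∇_ν R_{αβρδ} + R^ρ_{δλμ} ∇_ν R_{αβγρ} = 0`. -/
theorem stmt6 {n : ℕ} (g ginv : Pt n → Fin n → Fin n → ℝ) (hg : IsMetric g ginv)
    (h2 : TwoSymmetric g ginv) :
    ∀ (x : Pt n) (ν lam μ α β γ δ : Fin n),
      (∑ ρ, riemannUp g ginv x ρ ν lam μ * covD g ginv (riemann g ginv) x ![ρ, α, β, γ, δ]) +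
      (∑ ρ, riemannUp g ginv x ρ α lam μ * covD g ginv (riemann g ginv) x ![ν, ρ, β, γ, δ]) +
      (∑ ρ, riemannUp g ginv x ρ β lam μ * covD g ginv (riemann g ginv) x ![ν, α, ρ, γ, δ]) +
      (∑ ρ, riemannUp g ginv x ρ γ lam μ * covD g ginv (riemann g ginv) x ![ν, α, β, ρ, δ]) +
      (∑ ρ, riemannUp g ginv x ρ δ lam μ * covD g ginv (riemann g ginv) x ![ν, α, β, γ, ρ]) = 0 := by
  obtain ⟨hgsym, hgc, hginvc, -⟩ := hg
  have hGc : ∀ a b c : Fin n, ContDiff ℝ (⊤ : ℕ∞) fun x => christoffel g ginv x a b c := by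
    intro a b c
    show ContDiff ℝ (⊤ : ℕ∞) fun x => (1 / 2 : ℝ) * ∑ ρ, ginv x a ρ *
      (pd b (fun y => g y ρ c) x + pd c (fun y => g y ρ b) x - pd ρ (fun y => g y b c) x)
    exact contDiff_const.mul (ContDiff.sum fun ρ _ => (hginvc a ρ).mul
      (((contDiff_pd (hgc ρ c) b).add (contDiff_pd (hgc ρ b) c)).sub (contDiff_pd (hgc b c) ρ)))
  have hRupc : ∀ al be ga de : Fin n,
      ContDiff ℝ (⊤ : ℕ∞) fun x => riemannUp g ginv x al be ga de := by
    intro al be ga de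
    show ContDiff ℝ (⊤ : ℕ∞) fun x =>
      pd ga (fun y => christoffel g ginv y al de be) x -
      pd de (fun y => christoffel g ginv y al ga be) x +
      ∑ ρ, (christoffel g ginv x al ga ρ * christoffel g ginv x ρ de be -
            christoffel g ginv x al de ρ * christoffel g ginv x ρ ga be)
    exact ((contDiff_pd (hGc al de be) ga).sub (contDiff_pd (hGc al ga be) de)).add
      (ContDiff.sum fun ρ _ => ((hGc al ga ρ).mul (hGc ρ de be)).sub
        ((hGc al de ρ).mul (hGc ρ ga be)))
  have hRc : ∀ idx : Fin 4 → Fin n, ContDiff ℝ (⊤ : ℕ∞) fun x => riemann g ginv x idx := by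
    intro idx
    show ContDiff ℝ (⊤ : ℕ∞) fun x =>
      ∑ ρ, g x (idx 0) ρ * riemannUp g ginv x ρ (idx 1) (idx 2) (idx 3)
    exact ContDiff.sum fun ρ _ => (hgc (idx 0) ρ).mul (hRupc ρ (idx 1) (idx 2) (idx 3))
  have hSc : ∀ idx : Fin 5 → Fin n,
      ContDiff ℝ (⊤ : ℕ∞) fun x => covD g ginv (riemann g ginv) x idx := by
    intro idx
    show ContDiff ℝ (⊤ : ℕ∞) fun x =>
      pd (idx 0) (fun y => riemann g ginv y fun i => idx i.succ) x -
      ∑ i : Fin 4, ∑ ρ, christoffel g ginv x ρ (idx 0) (idx i.succ) *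
        riemann g ginv x (Function.update (fun j => idx j.succ) i ρ)
    exact (contDiff_pd (hRc _) (idx 0)).sub
      (ContDiff.sum fun i _ => ContDiff.sum fun ρ _ =>
        (hGc ρ (idx 0) (idx i.succ)).mul (hRc _))
  have hH : ∀ (x : Pt n) (lam b0 b1 b2 b3 b4 : Fin n),
      pd lam (fun y => covD g ginv (riemann g ginv) y ![b0, b1, b2, b3, b4]) x =
        (∑ ρ, christoffel g ginv x ρ lam b0 * covD g ginv (riemann g ginv) x ![ρ, b1, b2, b3, b4]) +
        (∑ ρ, christoffel g ginv x ρ lam b1 * covD g ginv (riemann g ginv) x ![b0, ρ, b2, b3, b4]) +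
        (∑ ρ, christoffel g ginv x ρ lam b2 * covD g ginv (riemann g ginv) x ![b0, b1, ρ, b3, b4]) +
        (∑ ρ, christoffel g ginv x ρ lam b3 * covD g ginv (riemann g ginv) x ![b0, b1, b2, ρ, b4]) +
        (∑ ρ, christoffel g ginv x ρ lam b4 * covD g ginv (riemann g ginv) x ![b0, b1, b2, b3, ρ]) := by
    intro x lam b0 b1 b2 b3 b4
    have h0 := h2 x ![lam, b0, b1, b2, b3, b4]
    set S := covD g ginv (riemann g ginv) with hS
    have hv : (fun i : Fin 5 => (![lam, b0, b1, b2, b3, b4] : Fin 6 → Fin n) i.succ) =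
        ![b0, b1, b2, b3, b4] := by
      funext i; fin_cases i <;> rfl
    have u0 : ∀ ρ : Fin n, Function.update (![b0, b1, b2, b3, b4] : Fin 5 → Fin n) 0 ρ = ![ρ, b1, b2, b3, b4] := by
      intro ρ; funext j; fin_cases j <;> simp [Function.update]
    have u1 : ∀ ρ : Fin n, Function.update (![b0, b1, b2, b3, b4] : Fin 5 → Fin n) 1 ρ = ![b0, ρ, b2, b3, b4] := by
      intro ρ; funext j; fin_cases j <;> simp [Function.update]
    have u2 : ∀ ρ : Fin n, Function.update (![b0, b1, b2, b3, b4] : Fin 5 → Fin n) 2 ρ = ![b0, b1, ρ, b3, b4] := by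
      intro ρ; funext j; fin_cases j <;> simp [Function.update]
    have u3 : ∀ ρ : Fin n, Function.update (![b0, b1, b2, b3, b4] : Fin 5 → Fin n) 3 ρ = ![b0, b1, b2, ρ, b4] := by
      intro ρ; funext j; fin_cases j <;> simp [Function.update]
    have u4 : ∀ ρ : Fin n, Function.update (![b0, b1, b2, b3, b4] : Fin 5 → Fin n) 4 ρ = ![b0, b1, b2, b3, ρ] := by
      intro ρ; funext j; fin_cases j <;> simp [Function.update]
    have c0 : (![lam, b0, b1, b2, b3, b4] : Fin 6 → Fin n) ((0 : Fin 5)).succ = b0 := rfl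
    have c1 : (![lam, b0, b1, b2, b3, b4] : Fin 6 → Fin n) ((1 : Fin 5)).succ = b1 := rfl
    have c2 : (![lam, b0, b1, b2, b3, b4] : Fin 6 → Fin n) ((2 : Fin 5)).succ = b2 := rfl
    have c3 : (![lam, b0, b1, b2, b3, b4] : Fin 6 → Fin n) ((3 : Fin 5)).succ = b3 := rfl
    have c4 : (![lam, b0, b1, b2, b3, b4] : Fin 6 → Fin n) ((4 : Fin 5)).succ = b4 := rfl
    simp only [covD] at h0
    rw [Fin.sum_univ_five] at h0
    simp only [hv, Matrix.cons_val_zero, c0, c1, c2, c3, c4, u0, u1, u2, u3, u4] at h0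
    rw [sub_eq_zero] at h0
    exact h0
  intro x ν lam μ α β γ δ
  have main := ricci5 (christoffel g ginv)
      (fun x b0 b1 b2 b3 b4 => covD g ginv (riemann g ginv) x ![b0, b1, b2, b3, b4])
      hGc (fun b0 b1 b2 b3 b4 => hSc ![b0, b1, b2, b3, b4]) hH x lam μ ν α β γ δ
  simp only [riemannUp]
  exact main
end
end

section
/- In any n-dimensional semi-symmetric semi-Riemannian manifold of any signature (in particular in any 2-symmetric one), the Riemann and Weyl tensors satisfy R^{ρ}_{αλμ} C_{ρβγδ} + R^{ρ}_{βλμ} C_{αργδ} + R^{ρ}_{γλμ} C_{αβρδ} + R^{ρ}_{δλμ} C_{αβγρ} = 0. -/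
noncomputable section

open scoped BigOperators

namespace Aux
variable {n : ℕ}

abbrev Sm (f : Pt n → ℝ) : Prop := ContDiff ℝ (⊤ : ℕ∞) f

theorem Sm.dAt {f : Pt n → ℝ} (hf : Sm f) (x : Pt n) : DifferentiableAt ℝ f x :=
  (hf.differentiable (by simp)).differentiableAt

theorem pd_add {f g : Pt n → ℝ} {x : Pt n} (hf : DifferentiableAt ℝ f x)
    (hg : DifferentiableAt ℝ g x) (i : Fin n) :
    pd i (fun y => f y + g y) x = pd i f x + pd i g x := by
  simp [pd, fderiv_fun_add hf hg]

theorem pd_sub {f g : Pt n → ℝ} {x : Pt n} (hf : DifferentiableAt ℝ f x)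
    (hg : DifferentiableAt ℝ g x) (i : Fin n) :
    pd i (fun y => f y - g y) x = pd i f x - pd i g x := by
  simp [pd, fderiv_fun_sub hf hg]

theorem pd_mul {f g : Pt n → ℝ} {x : Pt n} (hf : DifferentiableAt ℝ f x)
    (hg : DifferentiableAt ℝ g x) (i : Fin n) :
    pd i (fun y => f y * g y) x = f x * pd i g x + g x * pd i f x := by
  simp [pd, fderiv_fun_mul hf hg]

theorem pd_sum {ι : Type*} {s : Finset ι} {A : ι → Pt n → ℝ} {x : Pt n}
    (h : ∀ j ∈ s, DifferentiableAt ℝ (A j) x) (i : Fin n) :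
    pd i (fun y => ∑ j ∈ s, A j y) x = ∑ j ∈ s, pd i (A j) x := by
  simp [pd, fderiv_fun_sum h]

theorem pd_const (i : Fin n) (c : ℝ) : pd i (fun _ => c) x = 0 := by
  simp [pd]

theorem pd_const_mul {f : Pt n → ℝ} {x : Pt n} (hf : DifferentiableAt ℝ f x)
    (c : ℝ) (i : Fin n) : pd i (fun y => c * f y) x = c * pd i f x := by
  simp [pd, fderiv_const_mul hf]

theorem Sm.pd {f : Pt n → ℝ} (hf : Sm f) (i : Fin n) : Sm (pd i f) := by
  have h1 : ContDiff ℝ (⊤ : ℕ∞) (fderiv ℝ f) := by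
    apply hf.fderiv_right
    norm_cast
  exact h1.clm_apply contDiff_const

theorem pd_comm {f : Pt n → ℝ} (hf : Sm f) (i j : Fin n) (x : Pt n) :
    pd i (pd j f) x = pd j (pd i f) x := by
  have hsym : IsSymmSndFDerivAt ℝ f x := by
    apply (hf.contDiffAt).isSymmSndFDerivAt
    norm_cast
    rw [minSmoothness_of_isRCLikeNormedField]; exact WithTop.coe_le_coe.mpr le_top
  have h2 : ∀ u : Fin n, pd u f = fun y => fderiv ℝ f y (Pi.single u 1) := fun _ => rfl
  have hd : ∀ y, DifferentiableAt ℝ (fderiv ℝ f) y := by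
    intro y
    have h1 : ContDiff ℝ (⊤ : ℕ∞) (fderiv ℝ f) := by
      apply hf.fderiv_right
      norm_cast
    exact (h1.differentiable (by simp)).differentiableAt
  have key : ∀ u v : Fin n, pd u (pd v f) x =
      fderiv ℝ (fderiv ℝ f) x (Pi.single u 1) (Pi.single v 1) := by
    intro u v
    have : pd u (pd v f) x =
        fderiv ℝ (fun y => (fderiv ℝ f y) ((fun _ : Pt n => (Pi.single v 1 : Pt n)) y)) x
          (Pi.single u 1) := rfl
    rw [this, fderiv_clm_apply (hd x) (differentiableAt_const _)]
    simp
  rw [key, key, hsym]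

section metric
variable {g ginv : Pt n → Fin n → Fin n → ℝ} (hg : IsMetric g ginv)
include hg

theorem ginv_g (x : Pt n) (μ ν : Fin n) :
    (∑ ρ, ginv x μ ρ * g x ρ ν) = if μ = ν then (1 : ℝ) else 0 := hg.2.2.2 x μ ν

theorem ginv_symm (x : Pt n) (μ ν : Fin n) : ginv x μ ν = ginv x ν μ := by
  classical
  set M : Matrix (Fin n) (Fin n) ℝ := Matrix.of (g x)
  set N : Matrix (Fin n) (Fin n) ℝ := Matrix.of (ginv x)
  have hNM : N * M = 1 := by
    ext μ ν
    simpa [Matrix.mul_apply, Matrix.one_apply, M, N] using hg.2.2.2 x μ ν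
  have hMN : M * N = 1 := mul_eq_one_comm.mp hNM
  have hMt : M.transpose = M := by
    ext μ ν; simpa [Matrix.transpose_apply, M] using (hg.1 x ν μ)
  have hMNt : M * N.transpose = 1 := by
    have := congrArg Matrix.transpose hNM
    rw [Matrix.transpose_mul, hMt, Matrix.transpose_one] at this
    exact this
  have : N = N.transpose := by
    calc N = N * (M * N.transpose) := by rw [hMNt, Matrix.mul_one]
    _ = (N * M) * N.transpose := by rw [Matrix.mul_assoc]
    _ = N.transpose := by rw [hNM, Matrix.one_mul]
  have h2 : N μ ν = N.transpose μ ν := by rw [← this]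
  simpa [Matrix.transpose_apply, N] using h2

theorem g_ginv (x : Pt n) (μ ν : Fin n) :
    (∑ ρ, g x μ ρ * ginv x ρ ν) = if μ = ν then (1 : ℝ) else 0 := by
  have := hg.2.2.2 x ν μ
  rw [show (∑ ρ, g x μ ρ * ginv x ρ ν) = ∑ ρ, ginv x ν ρ * g x ρ μ by
    refine Finset.sum_congr rfl fun ρ _ => ?_
    rw [ginv_symm hg, hg.1, mul_comm]]
  rw [this]
  simp [eq_comm]

/-- Smoothness of pieces. -/
theorem sm_g (μ ν : Fin n) : Sm fun x => g x μ ν := hg.2.1 μ ν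
theorem sm_ginv (μ ν : Fin n) : Sm fun x => ginv x μ ν := hg.2.2.1 μ ν

end metric
end Aux

namespace Aux
variable {n : ℕ} {g ginv : Pt n → Fin n → Fin n → ℝ} (hg : IsMetric g ginv)
include hg

theorem sm_christoffel (α β γ : Fin n) : Sm fun x => christoffel g ginv x α β γ := by
  unfold christoffel
  exact contDiff_const.mul (ContDiff.sum fun ρ _ => (hg.2.2.1 α ρ).mul
    (((Sm.pd (hg.2.1 ρ γ) β).add (Sm.pd (hg.2.1 ρ β) γ)).sub (Sm.pd (hg.2.1 β γ) ρ)))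

theorem christoffel_symm (x : Pt n) (α β γ : Fin n) :
    christoffel g ginv x α β γ = christoffel g ginv x α γ β := by
  unfold christoffel
  congr 1
  refine Finset.sum_congr rfl fun ρ _ => ?_
  have h1 : (fun y => g y ρ γ) = fun y => g y γ ρ := funext fun y => hg.1 y ρ γ
  have h2 : (fun y => g y ρ β) = fun y => g y β ρ := funext fun y => hg.1 y ρ β
  have h3 : (fun y => g y β γ) = fun y => g y γ β := funext fun y => hg.1 y β γ
  rw [h3]
  ring

theorem sm_riemannUp (α β γ δ : Fin n) : Sm fun x => riemannUp g ginv x α β γ δ := by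
  unfold riemannUp
  exact (((Sm.pd (sm_christoffel hg α δ β) γ).sub (Sm.pd (sm_christoffel hg α γ β) δ)).add
    (ContDiff.sum fun ρ _ => ((sm_christoffel hg α γ ρ).mul (sm_christoffel hg ρ δ β)).sub
      ((sm_christoffel hg α δ ρ).mul (sm_christoffel hg ρ γ β))))

theorem sm_riemann (idx : Fin 4 → Fin n) : Sm fun x => riemann g ginv x idx := by
  unfold riemann
  exact ContDiff.sum fun ρ _ => (hg.2.1 _ ρ).mul (sm_riemannUp hg ρ _ _ _)

/-- `∑ ρ, g_{ρν} Γ^ρ_{λμ} = ½(∂_λ g_{νμ} + ∂_μ g_{νλ} - ∂_ν g_{λμ})`. -/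
theorem g_mul_christoffel (x : Pt n) (ν lam μ : Fin n) :
    (∑ ρ, g x ρ ν * christoffel g ginv x ρ lam μ) =
    (1/2) * (pd lam (fun y => g y ν μ) x + pd μ (fun y => g y ν lam) x -
      pd ν (fun y => g y lam μ) x) := by
  unfold christoffel
  have : ∀ ρ, g x ρ ν * ((1/2 : ℝ) * ∑ σ, ginv x ρ σ *
      (pd lam (fun y => g y σ μ) x + pd μ (fun y => g y σ lam) x - pd σ (fun y => g y lam μ) x)) =
      (1/2) * ∑ σ, (g x ν ρ * ginv x ρ σ) *
      (pd lam (fun y => g y σ μ) x + pd μ (fun y => g y σ lam) x - pd σ (fun y => g y lam μ) x) := by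
    intro ρ
    rw [show g x ρ ν = g x ν ρ from hg.1 x ρ ν, mul_left_comm, Finset.mul_sum]
    congr 1
    exact Finset.sum_congr rfl fun σ _ => (mul_assoc _ _ _).symm
  rw [Finset.sum_congr rfl fun ρ _ => this ρ, ← Finset.mul_sum, Finset.sum_comm]
  congr 1
  have key : ∀ σ : Fin n, (∑ ρ, (g x ν ρ * ginv x ρ σ) *
      (pd lam (fun y => g y σ μ) x + pd μ (fun y => g y σ lam) x - pd σ (fun y => g y lam μ) x)) =
      (if ν = σ then (1:ℝ) else 0) *
      (pd lam (fun y => g y σ μ) x + pd μ (fun y => g y σ lam) x - pd σ (fun y => g y lam μ) x) := by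
    intro σ
    rw [← Finset.sum_mul, g_ginv hg x ν σ]
  rw [Finset.sum_congr rfl fun σ _ => key σ]
  simp

theorem covD_g (x : Pt n) (idx : Fin 3 → Fin n) :
    covD g ginv (fun y (f : Fin 2 → Fin n) => g y (f 0) (f 1)) x idx = 0 := by
  unfold covD
  rw [Fin.sum_univ_two]
  have e0 : ∀ ρ, (fun y (f : Fin 2 → Fin n) => g y (f 0) (f 1)) x
      (Function.update (fun j : Fin 2 => idx j.succ) 0 ρ) = g x ρ (idx 2) := by
    intro ρ; simp [Function.update]
  have e1 : ∀ ρ, (fun y (f : Fin 2 → Fin n) => g y (f 0) (f 1)) x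
      (Function.update (fun j : Fin 2 => idx j.succ) 1 ρ) = g x (idx 1) ρ := by
    intro ρ; simp [Function.update]
  simp only [e0, e1, Fin.succ_zero_eq_one, Fin.succ_one_eq_two]
  have h1 : (∑ ρ, christoffel g ginv x ρ (idx 0) (idx 1) * g x ρ (idx 2)) =
      ∑ ρ, g x ρ (idx 2) * christoffel g ginv x ρ (idx 0) (idx 1) := by
    exact Finset.sum_congr rfl fun ρ _ => mul_comm _ _
  have h2 : (∑ ρ, christoffel g ginv x ρ (idx 0) (idx 2) * g x (idx 1) ρ) =
      ∑ ρ, g x ρ (idx 1) * christoffel g ginv x ρ (idx 0) (idx 2) := by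
    refine Finset.sum_congr rfl fun ρ _ => ?_
    rw [hg.1 x (idx 1) ρ, mul_comm]
  rw [h1, h2, g_mul_christoffel hg, g_mul_christoffel hg]
  have e2 : (fun y => g y (idx 2) (idx 1)) = fun y => g y (idx 1) (idx 2) :=
    funext fun y => hg.1 y _ _
  have e3 : (fun y => g y (idx 2) (idx 0)) = fun y => g y (idx 0) (idx 2) :=
    funext fun y => hg.1 y _ _
  have e4 : (fun y => g y (idx 1) (idx 0)) = fun y => g y (idx 0) (idx 1) :=
    funext fun y => hg.1 y _ _
  rw [e2, e3, e4]
  ring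

end Aux

namespace Aux
variable {n : ℕ} {g ginv : Pt n → Fin n → Fin n → ℝ} (hg : IsMetric g ginv)
include hg

theorem covD_cons {q : ℕ} (T : Tensor n q) (x : Pt n) (ν : Fin n) (idx : Fin q → Fin n) :
    covD g ginv T x (Fin.cons ν idx) =
    pd ν (fun y => T y idx) x - ∑ i : Fin q, ∑ ρ,
      christoffel g ginv x ρ ν (idx i) * T x (Function.update idx i ρ) := by
  unfold covD
  simp only [Fin.cons_zero, Fin.cons_succ]

theorem sm_covD {q : ℕ} {T : Tensor n q} (hT : ∀ f, Sm fun x => T x f)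
    (f : Fin (q+1) → Fin n) : Sm fun x => covD g ginv T x f := by
  unfold covD
  exact (Sm.pd (hT _) _).sub (ContDiff.sum fun i _ => ContDiff.sum fun ρ _ =>
    (sm_christoffel hg _ _ _).mul (hT _))

end Aux

namespace Aux
variable {n : ℕ} {g ginv : Pt n → Fin n → Fin n → ℝ} (hg : IsMetric g ginv)
include hg

theorem ricci_id {q : ℕ} (T : Tensor n q) (hT : ∀ f, Sm fun x => T x f)
    (x : Pt n) (μ ν : Fin n) (idx : Fin q → Fin n) :
    covD g ginv (covD g ginv T) x (Fin.cons μ (Fin.cons ν idx)) -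
    covD g ginv (covD g ginv T) x (Fin.cons ν (Fin.cons μ idx)) =
    -∑ i : Fin q, ∑ ρ, riemannUp g ginv x ρ (idx i) μ ν * T x (Function.update idx i ρ) := by
  classical
  -- abbreviations
  set C : Pt n → Fin n → Fin n → Fin n → ℝ := christoffel g ginv with hC
  -- the general formula for ∇∇T
  have formula : ∀ μ ν : Fin n,
      covD g ginv (covD g ginv T) x (Fin.cons μ (Fin.cons ν idx)) =
      (pd μ (pd ν (fun y => T y idx)) x
        - ∑ i : Fin q, ∑ ρ,
            (pd μ (fun y => C y ρ ν (idx i)) x * T x (Function.update idx i ρ)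
              + C x ρ ν (idx i) * pd μ (fun y => T y (Function.update idx i ρ)) x))
      - ((∑ ρ, C x ρ μ ν * covD g ginv T x (Fin.cons ρ idx))
        + ∑ j : Fin q, ∑ ρ, C x ρ μ (idx j) *
            (pd ν (fun y => T y (Function.update idx j ρ)) x
              - ∑ k : Fin q, ∑ σ, C x σ ν (Function.update idx j ρ k) *
                  T x (Function.update (Function.update idx j ρ) k σ))) := by
    intro μ ν
    rw [covD_cons hg]
    congr 1
    · -- the pd part
      have e : (fun y => covD g ginv T y (Fin.cons ν idx)) =
          fun y => pd ν (fun z => T z idx) y - ∑ i : Fin q, ∑ ρ,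
            C y ρ ν (idx i) * T y (Function.update idx i ρ) :=
        funext fun y => covD_cons hg T y ν idx
      rw [e, pd_sub ((Sm.pd (hT idx) ν).dAt x)
        (Sm.dAt (ContDiff.sum fun i _ => ContDiff.sum fun ρ _ =>
          (sm_christoffel hg _ _ _).mul (hT _)) x)]
      congr 1
      rw [pd_sum (fun i _ => Sm.dAt (ContDiff.sum fun ρ _ =>
          (sm_christoffel hg _ _ _).mul (hT _)) x)]
      refine Finset.sum_congr rfl fun i _ => ?_
      rw [pd_sum (fun ρ _ => Sm.dAt ((sm_christoffel hg _ _ _).mul (hT _)) x)]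
      refine Finset.sum_congr rfl fun ρ _ => ?_
      rw [pd_mul (Sm.dAt (sm_christoffel hg _ _ _) x) (Sm.dAt (hT _) x)]
      ring
    · -- the Γ part : split the sum over Fin (q+1)
      rw [Fin.sum_univ_succ]
      have hz : (∑ ρ, christoffel g ginv x ρ μ ((Fin.cons ν idx : Fin (q+1) → Fin n) 0) *
          covD g ginv T x (Function.update (Fin.cons ν idx) 0 ρ)) =
          ∑ ρ, C x ρ μ ν * covD g ginv T x (Fin.cons ρ idx) := by
        refine Finset.sum_congr rfl fun ρ _ => ?_
        rw [Fin.cons_zero, Fin.update_cons_zero, hC]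
      have hs : ∀ j : Fin q, (∑ ρ, christoffel g ginv x ρ μ
            ((Fin.cons ν idx : Fin (q+1) → Fin n) j.succ) *
            covD g ginv T x (Function.update (Fin.cons ν idx) j.succ ρ)) =
          ∑ ρ, C x ρ μ (idx j) *
            (pd ν (fun y => T y (Function.update idx j ρ)) x
              - ∑ k : Fin q, ∑ σ, C x σ ν (Function.update idx j ρ k) *
                  T x (Function.update (Function.update idx j ρ) k σ)) := by
        intro j
        refine Finset.sum_congr rfl fun ρ _ => ?_
        rw [Fin.cons_succ, ← Fin.cons_update, covD_cons hg, hC]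
      rw [hz, Finset.sum_congr rfl fun j _ => hs j]
  rw [formula μ ν, formula ν μ]
  -- symmetric pieces
  have hP1 : pd μ (pd ν (fun y => T y idx)) x = pd ν (pd μ (fun y => T y idx)) x :=
    pd_comm (hT idx) μ ν x
  have hP4 : (∑ ρ, C x ρ μ ν * covD g ginv T x (Fin.cons ρ idx)) =
      ∑ ρ, C x ρ ν μ * covD g ginv T x (Fin.cons ρ idx) :=
    Finset.sum_congr rfl fun ρ _ => by rw [hC, christoffel_symm hg]
  -- split each inner k-sum into diagonal (k = j) and off-diagonal parts
  have hsplit : ∀ μ ν : Fin n,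
      (∑ j : Fin q, ∑ ρ, C x ρ μ (idx j) *
        (pd ν (fun y => T y (Function.update idx j ρ)) x
          - ∑ k : Fin q, ∑ σ, C x σ ν (Function.update idx j ρ k) *
              T x (Function.update (Function.update idx j ρ) k σ))) =
      (∑ j : Fin q, ∑ ρ, C x ρ μ (idx j) * pd ν (fun y => T y (Function.update idx j ρ)) x)
      - (∑ j : Fin q, ∑ ρ, ∑ σ, C x ρ μ (idx j) * C x σ ν ρ * T x (Function.update idx j σ))
      - (∑ j : Fin q, ∑ k ∈ Finset.univ.erase j, ∑ ρ, ∑ σ,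
          C x ρ μ (idx j) * C x σ ν (idx k) *
            T x (Function.update (Function.update idx j ρ) k σ)) := by
    intro μ ν
    rw [← Finset.sum_sub_distrib, ← Finset.sum_sub_distrib]
    refine Finset.sum_congr rfl fun j _ => ?_
    rw [← Finset.sum_sub_distrib]
    have hswap : (∑ k ∈ Finset.univ.erase j, ∑ ρ, ∑ σ,
        C x ρ μ (idx j) * C x σ ν (idx k) *
          T x (Function.update (Function.update idx j ρ) k σ)) =
        ∑ ρ, ∑ k ∈ Finset.univ.erase j, ∑ σ,
        C x ρ μ (idx j) * C x σ ν (idx k) *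
          T x (Function.update (Function.update idx j ρ) k σ) := Finset.sum_comm
    rw [hswap, ← Finset.sum_sub_distrib]
    refine Finset.sum_congr rfl fun ρ _ => ?_
    have hksum : (∑ k : Fin q, ∑ σ, C x σ ν (Function.update idx j ρ k) *
        T x (Function.update (Function.update idx j ρ) k σ)) =
        (∑ σ, C x σ ν ρ * T x (Function.update idx j σ))
        + ∑ k ∈ Finset.univ.erase j, ∑ σ, C x σ ν (idx k) *
            T x (Function.update (Function.update idx j ρ) k σ) := by
      rw [← Finset.add_sum_erase _ _ (Finset.mem_univ j)]
      congr 1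
      · refine Finset.sum_congr rfl fun σ _ => ?_
        rw [Function.update_self, Function.update_idem]
      · refine Finset.sum_congr rfl fun k hk => Finset.sum_congr rfl fun σ _ => ?_
        rw [Function.update_of_ne (Finset.ne_of_mem_erase hk)]
    rw [hksum, mul_sub, mul_add]
    rw [Finset.mul_sum, Finset.mul_sum]
    have : ∀ σ, C x ρ μ (idx j) * (C x σ ν ρ * T x (Function.update idx j σ)) =
        C x ρ μ (idx j) * C x σ ν ρ * T x (Function.update idx j σ) := fun σ => by ring
    rw [Finset.sum_congr rfl fun σ _ => this σ]
    have : ∀ k ∈ Finset.univ.erase j, (C x ρ μ (idx j) * (∑ σ, C x σ ν (idx k) *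
        T x (Function.update (Function.update idx j ρ) k σ))) =
        ∑ σ, C x ρ μ (idx j) * C x σ ν (idx k) *
          T x (Function.update (Function.update idx j ρ) k σ) := by
      intro k _
      rw [Finset.mul_sum]
      exact Finset.sum_congr rfl fun σ _ => by ring
    rw [Finset.sum_congr rfl this]
    ring
  rw [hsplit μ ν, hsplit ν μ]
  -- off-diagonal double-Γ part is symmetric in μ ↔ ν
  have hoff : (∑ j : Fin q, ∑ k ∈ Finset.univ.erase j, ∑ ρ, ∑ σ,
      C x ρ μ (idx j) * C x σ ν (idx k) *
        T x (Function.update (Function.update idx j ρ) k σ)) =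
      (∑ j : Fin q, ∑ k ∈ Finset.univ.erase j, ∑ ρ, ∑ σ,
      C x ρ ν (idx j) * C x σ μ (idx k) *
        T x (Function.update (Function.update idx j ρ) k σ)) := by
    rw [Finset.sum_comm' (s' := fun k => Finset.univ.erase k) (t' := Finset.univ)
      (by intro j k; simp [eq_comm, ne_comm, and_comm])]
    refine Finset.sum_congr rfl fun j _ => Finset.sum_congr rfl fun k hk => ?_
    have hjk : k ≠ j := Finset.ne_of_mem_erase hk
    rw [Finset.sum_comm]
    refine Finset.sum_congr rfl fun ρ _ => Finset.sum_congr rfl fun σ _ => ?_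
    rw [Function.update_comm hjk]
    ring
  rw [hoff]
  -- diagonal double-Γ: reindex the ρ,σ sums
  have hdiag : ∀ μ ν : Fin n,
      (∑ j : Fin q, ∑ ρ, ∑ σ, C x ρ μ (idx j) * C x σ ν ρ * T x (Function.update idx j σ)) =
      ∑ j : Fin q, ∑ ρ, (∑ σ, C x σ μ (idx j) * C x ρ ν σ) * T x (Function.update idx j ρ) := by
    intro μ ν
    refine Finset.sum_congr rfl fun j _ => ?_
    rw [Finset.sum_comm]
    refine Finset.sum_congr rfl fun ρ _ => ?_
    rw [Finset.sum_mul]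
  rw [hdiag μ ν, hdiag ν μ, hP1, hP4]
  -- now assemble everything into a single double sum
  have hmix : ∀ μ ν : Fin n,
      (∑ i : Fin q, ∑ ρ,
        (pd μ (fun y => C y ρ ν (idx i)) x * T x (Function.update idx i ρ)
          + C x ρ ν (idx i) * pd μ (fun y => T y (Function.update idx i ρ)) x)) =
      (∑ i : Fin q, ∑ ρ, pd μ (fun y => C y ρ ν (idx i)) x * T x (Function.update idx i ρ))
      + (∑ i : Fin q, ∑ ρ, C x ρ ν (idx i) * pd μ (fun y => T y (Function.update idx i ρ)) x) := by
    intro μ ν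
    rw [← Finset.sum_add_distrib]
    exact Finset.sum_congr rfl fun i _ => Finset.sum_add_distrib
  rw [hmix μ ν, hmix ν μ]
  have hfin : ∀ i : Fin q,
      (-(∑ ρ, pd μ (fun y => C y ρ ν (idx i)) x * T x (Function.update idx i ρ))
        + (∑ ρ, pd ν (fun y => C y ρ μ (idx i)) x * T x (Function.update idx i ρ))
        + (∑ ρ, (∑ σ, C x σ μ (idx i) * C x ρ ν σ) * T x (Function.update idx i ρ))
        - (∑ ρ, (∑ σ, C x σ ν (idx i) * C x ρ μ σ) * T x (Function.update idx i ρ))) =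
      -∑ ρ, riemannUp g ginv x ρ (idx i) μ ν * T x (Function.update idx i ρ) := by
    intro i
    rw [← Finset.sum_neg_distrib, ← Finset.sum_add_distrib, ← Finset.sum_add_distrib,
      ← Finset.sum_sub_distrib, ← Finset.sum_neg_distrib]
    refine Finset.sum_congr rfl fun ρ _ => ?_
    unfold riemannUp
    rw [hC]
    have e1 : (∑ σ, C x σ μ (idx i) * C x ρ ν σ) =
        ∑ σ, christoffel g ginv x ρ ν σ * christoffel g ginv x σ μ (idx i) :=
      Finset.sum_congr rfl fun σ _ => by rw [hC]; ring
    have e2 : (∑ σ, C x σ ν (idx i) * C x ρ μ σ) =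
        ∑ σ, christoffel g ginv x ρ μ σ * christoffel g ginv x σ ν (idx i) :=
      Finset.sum_congr rfl fun σ _ => by rw [hC]; ring
    rw [e1, e2, Finset.sum_sub_distrib]
    ring
  conv_rhs => rw [← Finset.sum_neg_distrib,
    Finset.sum_congr rfl fun i _ => (hfin i).symm,
    Finset.sum_sub_distrib, Finset.sum_add_distrib, Finset.sum_add_distrib,
    Finset.sum_neg_distrib]
  ring

end Aux

namespace Aux
variable {n : ℕ} {g ginv : Pt n → Fin n → Fin n → ℝ} (hg : IsMetric g ginv)
include hg

omit hg in
theorem covD_zero (x : Pt n) {q : ℕ} (idx : Fin (q+1) → Fin n) :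
    covD g ginv (fun _ _ => (0:ℝ)) x idx = 0 := by
  unfold covD
  simp [pd]

/-- `∑ρ R^ρ_{aλμ} g_{ρb} + ∑ρ R^ρ_{bλμ} g_{aρ} = 0`. -/
theorem op2g (x : Pt n) (lam μ a b : Fin n) :
    (∑ ρ, riemannUp g ginv x ρ a lam μ * g x ρ b) +
    (∑ ρ, riemannUp g ginv x ρ b lam μ * g x a ρ) = 0 := by
  classical
  set Tg : Tensor n 2 := fun y f => g y (f 0) (f 1) with hTg
  have hzero : covD g ginv Tg = fun _ _ => (0:ℝ) :=
    funext fun y => funext fun f => covD_g hg y f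
  have hr := ricci_id hg Tg (fun f => hg.2.1 (f 0) (f 1)) x lam μ ![a,b]
  rw [show covD g ginv (covD g ginv Tg) = covD g ginv (fun _ _ => (0:ℝ)) from by rw [hzero]]
    at hr
  rw [covD_zero x _, covD_zero x _, sub_self] at hr
  have h2 := hr.symm
  rw [neg_eq_zero, Fin.sum_univ_two] at h2
  have e0 : ∀ ρ : Fin n, Tg x (Function.update ![a,b] 0 ρ) = g x ρ b := by
    intro ρ
    rw [show Function.update ![a,b] 0 ρ = ![ρ,b] from by
      funext i; fin_cases i <;> simp [Function.update]]
    rfl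
  have e1 : ∀ ρ : Fin n, Tg x (Function.update ![a,b] 1 ρ) = g x a ρ := by
    intro ρ
    rw [show Function.update ![a,b] 1 ρ = ![a,ρ] from by
      funext i; fin_cases i <;> simp [Function.update]]
    rfl
  simp only [e0, e1, Matrix.cons_val_zero, Matrix.cons_val_one, Matrix.head_cons] at h2
  exact h2

end Aux

namespace Aux
variable {n : ℕ} {g ginv : Pt n → Fin n → Fin n → ℝ} (hg : IsMetric g ginv)
include hg

/-- Antisymmetry of the covariant Riemann tensor in its first two indices. -/
theorem riemann_antisym (x : Pt n) (α β lam μ : Fin n) :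
    riemann g ginv x ![α,β,lam,μ] = -riemann g ginv x ![β,α,lam,μ] := by
  have h := op2g hg x lam μ β α
  have e1 : (∑ ρ, riemannUp g ginv x ρ β lam μ * g x ρ α) = riemann g ginv x ![α,β,lam,μ] := by
    unfold riemann
    refine Finset.sum_congr rfl fun ρ _ => ?_
    simp only [Matrix.cons_val_zero, Matrix.cons_val_one, Matrix.head_cons,
      Matrix.cons_val_two, Matrix.tail_cons, Matrix.cons_val_three]
    rw [hg.1 x α ρ]; ring
  have e2 : (∑ ρ, riemannUp g ginv x ρ α lam μ * g x β ρ) = riemann g ginv x ![β,α,lam,μ] := by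
    unfold riemann
    refine Finset.sum_congr rfl fun ρ _ => ?_
    simp only [Matrix.cons_val_zero, Matrix.cons_val_one, Matrix.head_cons,
      Matrix.cons_val_two, Matrix.tail_cons, Matrix.cons_val_three]
    ring
  rw [e1, e2] at h
  linarith

/-- Raise the first index: `R^ρ_{αλμ} = ∑_τ g^{ρτ} R_{ταλμ}`. -/
theorem riemannUp_eq (x : Pt n) (ρ α lam μ : Fin n) :
    riemannUp g ginv x ρ α lam μ = ∑ τ, ginv x ρ τ * riemann g ginv x ![τ,α,lam,μ] := by
  unfold riemann
  simp only [Matrix.cons_val_zero, Matrix.cons_val_one, Matrix.head_cons,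
    Matrix.cons_val_two, Matrix.tail_cons, Matrix.cons_val_three]
  have : ∀ τ, ginv x ρ τ * ∑ σ, g x τ σ * riemannUp g ginv x σ α lam μ =
      ∑ σ, (ginv x ρ τ * g x τ σ) * riemannUp g ginv x σ α lam μ := by
    intro τ; rw [Finset.mul_sum]; exact Finset.sum_congr rfl fun σ _ => by ring
  rw [Finset.sum_congr rfl fun τ _ => this τ, Finset.sum_comm]
  have : ∀ σ, (∑ τ, (ginv x ρ τ * g x τ σ) * riemannUp g ginv x σ α lam μ) =
      (if ρ = σ then (1:ℝ) else 0) * riemannUp g ginv x σ α lam μ := by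
    intro σ; rw [← Finset.sum_mul, ginv_g hg]
  rw [Finset.sum_congr rfl fun σ _ => this σ]
  simp

/-- `Op₄(R) = 0`: the content of semi-symmetry. -/
theorem op4R (hss : SemiSymmetric g ginv) (x : Pt n) (lam μ α β γ δ : Fin n) :
    (∑ ρ, riemannUp g ginv x ρ α lam μ * riemann g ginv x ![ρ,β,γ,δ]) +
    (∑ ρ, riemannUp g ginv x ρ β lam μ * riemann g ginv x ![α,ρ,γ,δ]) +
    (∑ ρ, riemannUp g ginv x ρ γ lam μ * riemann g ginv x ![α,β,ρ,δ]) +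
    (∑ ρ, riemannUp g ginv x ρ δ lam μ * riemann g ginv x ![α,β,γ,ρ]) = 0 := by
  have hr := ricci_id hg (riemann g ginv) (fun f => sm_riemann hg f) x lam μ ![α,β,γ,δ]
  have hzero : covD g ginv (covD g ginv (riemann g ginv)) x
      (Fin.cons lam (Fin.cons μ ![α,β,γ,δ])) -
      covD g ginv (covD g ginv (riemann g ginv)) x
      (Fin.cons μ (Fin.cons lam ![α,β,γ,δ])) = 0 := by
    rw [show (Fin.cons lam (Fin.cons μ ![α,β,γ,δ]) : Fin 6 → Fin n) = ![lam,μ,α,β,γ,δ] from rfl,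
      show (Fin.cons μ (Fin.cons lam ![α,β,γ,δ]) : Fin 6 → Fin n) = ![μ,lam,α,β,γ,δ] from rfl,
      hss x lam μ α β γ δ, sub_self]
  rw [hzero] at hr
  have h2 := hr.symm
  rw [neg_eq_zero, Fin.sum_univ_four] at h2
  have u0 : ∀ ρ : Fin n, Function.update ![α,β,γ,δ] 0 ρ = ![ρ,β,γ,δ] := fun ρ => by
    funext i; fin_cases i <;> simp [Function.update]
  have u1 : ∀ ρ : Fin n, Function.update ![α,β,γ,δ] 1 ρ = ![α,ρ,γ,δ] := fun ρ => by
    funext i; fin_cases i <;> simp [Function.update]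
  have u2 : ∀ ρ : Fin n, Function.update ![α,β,γ,δ] 2 ρ = ![α,β,ρ,δ] := fun ρ => by
    funext i; fin_cases i <;> simp [Function.update]
  have u3 : ∀ ρ : Fin n, Function.update ![α,β,γ,δ] 3 ρ = ![α,β,γ,ρ] := fun ρ => by
    funext i; fin_cases i <;> simp [Function.update]
  simp only [u0, u1, u2, u3, Matrix.cons_val_zero, Matrix.cons_val_one, Matrix.head_cons,
    Matrix.cons_val_two, Matrix.tail_cons, Matrix.cons_val_three] at h2
  exact h2

end Aux

namespace Aux
variable {n : ℕ} {g ginv : Pt n → Fin n → Fin n → ℝ} (hg : IsMetric g ginv)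

omit hg in
theorem pull (Gf : Fin n → Fin n → ℝ) (R : Fin n → ℝ) (F : Fin n → Fin n → Fin n → ℝ) :
    (∑ a, ∑ c, Gf a c * ∑ ρ, R ρ * F ρ a c) = ∑ ρ, R ρ * (∑ a, ∑ c, Gf a c * F ρ a c) := by
  calc (∑ a, ∑ c, Gf a c * ∑ ρ, R ρ * F ρ a c)
      = ∑ a, ∑ c, ∑ ρ, R ρ * (Gf a c * F ρ a c) := by
        refine Finset.sum_congr rfl fun a _ => Finset.sum_congr rfl fun c _ => ?_
        rw [Finset.mul_sum]
        exact Finset.sum_congr rfl fun ρ _ => by ring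
    _ = ∑ a, ∑ ρ, ∑ c, R ρ * (Gf a c * F ρ a c) :=
        Finset.sum_congr rfl fun a _ => Finset.sum_comm
    _ = ∑ ρ, ∑ a, ∑ c, R ρ * (Gf a c * F ρ a c) := Finset.sum_comm
    _ = ∑ ρ, R ρ * (∑ a, ∑ c, Gf a c * F ρ a c) := by
        refine Finset.sum_congr rfl fun ρ _ => ?_
        rw [Finset.mul_sum]
        exact Finset.sum_congr rfl fun a _ => (Finset.mul_sum _ _ _).symm

omit hg in
theorem pull3 (Gf : Fin n → Fin n → ℝ) (R : Fin n → Fin n → ℝ) (F : Fin n → Fin n → ℝ) :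
    (∑ a, ∑ c, Gf a c * ∑ ρ, R ρ a * F ρ c) =
    ∑ ρ, ∑ c, (∑ a, Gf a c * R ρ a) * F ρ c := by
  calc (∑ a, ∑ c, Gf a c * ∑ ρ, R ρ a * F ρ c)
      = ∑ a, ∑ c, ∑ ρ, Gf a c * R ρ a * F ρ c := by
        refine Finset.sum_congr rfl fun a _ => Finset.sum_congr rfl fun c _ => ?_
        rw [Finset.mul_sum]
        exact Finset.sum_congr rfl fun ρ _ => by ring
    _ = ∑ a, ∑ ρ, ∑ c, Gf a c * R ρ a * F ρ c :=
        Finset.sum_congr rfl fun a _ => Finset.sum_comm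
    _ = ∑ ρ, ∑ a, ∑ c, Gf a c * R ρ a * F ρ c := Finset.sum_comm
    _ = ∑ ρ, ∑ c, ∑ a, Gf a c * R ρ a * F ρ c :=
        Finset.sum_congr rfl fun ρ _ => Finset.sum_comm
    _ = ∑ ρ, ∑ c, (∑ a, Gf a c * R ρ a) * F ρ c := by
        refine Finset.sum_congr rfl fun ρ _ => Finset.sum_congr rfl fun c _ => ?_
        rw [Finset.sum_mul]

omit hg in
theorem pull4 (Gf : Fin n → Fin n → ℝ) (R : Fin n → Fin n → ℝ) (F : Fin n → Fin n → ℝ) :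
    (∑ a, ∑ c, Gf a c * ∑ ρ, R ρ c * F ρ a) =
    ∑ ρ, ∑ a, (∑ c, Gf a c * R ρ c) * F ρ a := by
  calc (∑ a, ∑ c, Gf a c * ∑ ρ, R ρ c * F ρ a)
      = ∑ a, ∑ c, ∑ ρ, Gf a c * R ρ c * F ρ a := by
        refine Finset.sum_congr rfl fun a _ => Finset.sum_congr rfl fun c _ => ?_
        rw [Finset.mul_sum]
        exact Finset.sum_congr rfl fun ρ _ => by ring
    _ = ∑ a, ∑ ρ, ∑ c, Gf a c * R ρ c * F ρ a :=
        Finset.sum_congr rfl fun a _ => Finset.sum_comm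
    _ = ∑ ρ, ∑ a, ∑ c, Gf a c * R ρ c * F ρ a := Finset.sum_comm
    _ = ∑ ρ, ∑ a, (∑ c, Gf a c * R ρ c) * F ρ a := by
        refine Finset.sum_congr rfl fun ρ _ => Finset.sum_congr rfl fun a _ => ?_
        rw [Finset.sum_mul]

include hg

/-- Contraction of `riemann` over slots 0,2 gives `ricci`. -/
theorem ric_contr (x : Pt n) (a b : Fin n) :
    (∑ α, ∑ γ, ginv x α γ * riemann g ginv x ![α,a,γ,b]) = ricci g ginv x ![a,b] := by
  unfold riemann ricci
  simp only [Matrix.cons_val_zero, Matrix.cons_val_one, Matrix.head_cons,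
    Matrix.cons_val_two, Matrix.tail_cons, Matrix.cons_val_three]
  have h1 : ∀ γ, (∑ α, ginv x α γ * ∑ σ, g x α σ * riemannUp g ginv x σ a γ b) =
      riemannUp g ginv x γ a γ b := by
    intro γ
    have : ∀ α, ginv x α γ * ∑ σ, g x α σ * riemannUp g ginv x σ a γ b =
        ∑ σ, (ginv x γ α * g x α σ) * riemannUp g ginv x σ a γ b := by
      intro α
      rw [Finset.mul_sum]
      exact Finset.sum_congr rfl fun σ _ => by rw [ginv_symm hg x α γ]; ring
    rw [Finset.sum_congr rfl fun α _ => this α, Finset.sum_comm]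
    have h2 : ∀ σ, (∑ α, (ginv x γ α * g x α σ) * riemannUp g ginv x σ a γ b) =
        (if γ = σ then (1:ℝ) else 0) * riemannUp g ginv x σ a γ b := by
      intro σ; rw [← Finset.sum_mul, ginv_g hg]
    rw [Finset.sum_congr rfl fun σ _ => h2 σ]
    simp
  rw [Finset.sum_comm]
  -- goal: ∑ γ ∑ α ... = ∑ ρ R^ρ_{a ρ b}
  exact Finset.sum_congr rfl fun γ _ => by rw [← h1 γ]

/-- `Op₂(Ric) = 0`. -/
theorem op2Ric (hss : SemiSymmetric g ginv) (x : Pt n) (lam μ a b : Fin n) :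
    (∑ ρ, riemannUp g ginv x ρ a lam μ * ricci g ginv x ![ρ,b]) +
    (∑ ρ, riemannUp g ginv x ρ b lam μ * ricci g ginv x ![a,ρ]) = 0 := by
  classical
  have base : (∑ α, ∑ γ, ginv x α γ *
      ((∑ ρ, riemannUp g ginv x ρ α lam μ * riemann g ginv x ![ρ,a,γ,b]) +
       (∑ ρ, riemannUp g ginv x ρ a lam μ * riemann g ginv x ![α,ρ,γ,b]) +
       (∑ ρ, riemannUp g ginv x ρ γ lam μ * riemann g ginv x ![α,a,ρ,b]) +
       (∑ ρ, riemannUp g ginv x ρ b lam μ * riemann g ginv x ![α,a,γ,ρ]))) = 0 :=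
    Finset.sum_eq_zero fun α _ => Finset.sum_eq_zero fun γ _ => by
      rw [op4R hg hss x lam μ α a γ b, mul_zero]
  simp only [mul_add, Finset.sum_add_distrib] at base
  -- S2 and S4
  rw [pull (ginv x) (fun ρ => riemannUp g ginv x ρ a lam μ)
      (fun ρ α γ => riemann g ginv x ![α,ρ,γ,b]),
    pull (ginv x) (fun ρ => riemannUp g ginv x ρ b lam μ)
      (fun ρ α γ => riemann g ginv x ![α,a,γ,ρ]),
    pull3 (ginv x) (fun ρ α => riemannUp g ginv x ρ α lam μ)
      (fun ρ γ => riemann g ginv x ![ρ,a,γ,b]),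
    pull4 (ginv x) (fun ρ γ => riemannUp g ginv x ρ γ lam μ)
      (fun ρ α => riemann g ginv x ![α,a,ρ,b])] at base
  simp only [ric_contr hg] at base
  -- now handle the S1 + S3 part
  set F : Fin n → Fin n → ℝ := fun ρ c => ∑ t, ginv x t c * riemannUp g ginv x ρ t lam μ
    with hF
  have hS3 : (∑ ρ, ∑ α, (∑ γ, ginv x α γ * riemannUp g ginv x ρ γ lam μ) *
      riemann g ginv x ![α,a,ρ,b]) =
      ∑ ρ, ∑ γ, F ρ γ * riemann g ginv x ![γ,a,ρ,b] := by
    refine Finset.sum_congr rfl fun ρ _ => Finset.sum_congr rfl fun α _ => ?_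
    congr 1
    rw [hF]
    exact Finset.sum_congr rfl fun t _ => by rw [ginv_symm hg x t α]
  rw [hS3] at base
  have h13 : (∑ ρ, ∑ γ, F ρ γ * riemann g ginv x ![ρ,a,γ,b]) +
      (∑ ρ, ∑ γ, F ρ γ * riemann g ginv x ![γ,a,ρ,b]) = 0 := by
    have merge : (∑ ρ, ∑ γ, F ρ γ * riemann g ginv x ![ρ,a,γ,b]) +
        (∑ ρ, ∑ γ, F ρ γ * riemann g ginv x ![γ,a,ρ,b]) =
        ∑ ρ, ∑ γ, F ρ γ * (riemann g ginv x ![ρ,a,γ,b] + riemann g ginv x ![γ,a,ρ,b]) := by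
      rw [← Finset.sum_add_distrib]
      refine Finset.sum_congr rfl fun ρ _ => ?_
      rw [← Finset.sum_add_distrib]
      exact Finset.sum_congr rfl fun γ _ => by ring
    rw [merge]
    have hFexp : ∀ ρ c, F ρ c =
        ∑ t, ∑ τ, ginv x t c * ginv x ρ τ * riemann g ginv x ![τ,t,lam,μ] := by
      intro ρ c
      rw [hF]
      refine Finset.sum_congr rfl fun t _ => ?_
      rw [riemannUp_eq hg, Finset.mul_sum]
      exact Finset.sum_congr rfl fun τ _ => by ring
    have hFanti : ∀ ρ c, F c ρ = -F ρ c := by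
      intro ρ c
      rw [hFexp, hFexp]
      calc (∑ t, ∑ τ, ginv x t ρ * ginv x c τ * riemann g ginv x ![τ,t,lam,μ])
          = ∑ τ, ∑ t, ginv x t ρ * ginv x c τ * riemann g ginv x ![τ,t,lam,μ] :=
            Finset.sum_comm
        _ = ∑ t, ∑ τ, ginv x τ ρ * ginv x c t * riemann g ginv x ![t,τ,lam,μ] := rfl
        _ = ∑ t, ∑ τ, -(ginv x t c * ginv x ρ τ * riemann g ginv x ![τ,t,lam,μ]) := by
            refine Finset.sum_congr rfl fun t _ => Finset.sum_congr rfl fun τ _ => ?_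
            rw [ginv_symm hg x τ ρ, ginv_symm hg x c t, riemann_antisym hg x t τ lam μ]
            ring
        _ = -∑ t, ∑ τ, ginv x t c * ginv x ρ τ * riemann g ginv x ![τ,t,lam,μ] := by
            simp [Finset.sum_neg_distrib]
    have hkey : (∑ ρ, ∑ γ, F ρ γ * (riemann g ginv x ![ρ,a,γ,b] + riemann g ginv x ![γ,a,ρ,b]))
        = -(∑ ρ, ∑ γ, F ρ γ * (riemann g ginv x ![ρ,a,γ,b] + riemann g ginv x ![γ,a,ρ,b])) := by
      calc (∑ ρ, ∑ γ, F ρ γ * (riemann g ginv x ![ρ,a,γ,b] + riemann g ginv x ![γ,a,ρ,b]))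
          = ∑ γ, ∑ ρ, F ρ γ * (riemann g ginv x ![ρ,a,γ,b] + riemann g ginv x ![γ,a,ρ,b]) :=
            Finset.sum_comm
        _ = ∑ ρ, ∑ γ, F γ ρ * (riemann g ginv x ![γ,a,ρ,b] + riemann g ginv x ![ρ,a,γ,b]) := rfl
        _ = ∑ ρ, ∑ γ, -(F ρ γ * (riemann g ginv x ![ρ,a,γ,b] + riemann g ginv x ![γ,a,ρ,b])) := by
            refine Finset.sum_congr rfl fun ρ _ => Finset.sum_congr rfl fun γ _ => ?_
            rw [hFanti]
            ring
        _ = -(∑ ρ, ∑ γ, F ρ γ * (riemann g ginv x ![ρ,a,γ,b] + riemann g ginv x ![γ,a,ρ,b])) := by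
            simp [Finset.sum_neg_distrib]
    linarith
  linarith

end Aux

namespace Aux
variable {n : ℕ} {g ginv : Pt n → Fin n → Fin n → ℝ} (hg : IsMetric g ginv)

omit hg in
/-- Leibniz action of the curvature operator on a product of two 2-tensors. -/
theorem op_prod (A B : Pt n → Fin n → Fin n → ℝ)
    (hA : ∀ x lam μ a b, (∑ ρ, riemannUp g ginv x ρ a lam μ * A x ρ b) +
      (∑ ρ, riemannUp g ginv x ρ b lam μ * A x a ρ) = 0)
    (hB : ∀ x lam μ a b, (∑ ρ, riemannUp g ginv x ρ a lam μ * B x ρ b) +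
      (∑ ρ, riemannUp g ginv x ρ b lam μ * B x a ρ) = 0)
    (x : Pt n) (lam μ α β γ δ : Fin n) :
    (∑ ρ, riemannUp g ginv x ρ α lam μ * (A x ρ γ * B x δ β)) +
    (∑ ρ, riemannUp g ginv x ρ β lam μ * (A x α γ * B x δ ρ)) +
    (∑ ρ, riemannUp g ginv x ρ γ lam μ * (A x α ρ * B x δ β)) +
    (∑ ρ, riemannUp g ginv x ρ δ lam μ * (A x α γ * B x ρ β)) = 0 := by
  have e1 : (∑ ρ, riemannUp g ginv x ρ α lam μ * (A x ρ γ * B x δ β)) =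
      (∑ ρ, riemannUp g ginv x ρ α lam μ * A x ρ γ) * B x δ β := by
    rw [Finset.sum_mul]; exact Finset.sum_congr rfl fun ρ _ => by ring
  have e3 : (∑ ρ, riemannUp g ginv x ρ γ lam μ * (A x α ρ * B x δ β)) =
      (∑ ρ, riemannUp g ginv x ρ γ lam μ * A x α ρ) * B x δ β := by
    rw [Finset.sum_mul]; exact Finset.sum_congr rfl fun ρ _ => by ring
  have e2 : (∑ ρ, riemannUp g ginv x ρ β lam μ * (A x α γ * B x δ ρ)) =
      A x α γ * (∑ ρ, riemannUp g ginv x ρ β lam μ * B x δ ρ) := by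
    rw [Finset.mul_sum]; exact Finset.sum_congr rfl fun ρ _ => by ring
  have e4 : (∑ ρ, riemannUp g ginv x ρ δ lam μ * (A x α γ * B x ρ β)) =
      A x α γ * (∑ ρ, riemannUp g ginv x ρ δ lam μ * B x ρ β) := by
    rw [Finset.mul_sum]; exact Finset.sum_congr rfl fun ρ _ => by ring
  rw [e1, e2, e3, e4]
  linear_combination B x δ β * hA x lam μ α γ + A x α γ * hB x lam μ δ β

include hg

/-- `Op₂(g) = 0` restated for the flipped metric factor as well. -/
theorem op2g' (x : Pt n) (lam μ a b : Fin n) :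
    (∑ ρ, riemannUp g ginv x ρ a lam μ * g x ρ b) +
    (∑ ρ, riemannUp g ginv x ρ b lam μ * g x a ρ) = 0 := op2g hg x lam μ a b

/-- Canonical 7-term form of the Weyl tensor. -/
theorem weyl_eval (x : Pt n) (a b c d : Fin n) :
    weyl g ginv x ![a,b,c,d] =
    riemann g ginv x ![a,b,c,d]
      - (1/((n:ℝ)-2)) * (ricci g ginv x ![a,c] * g x d b)
      + (1/((n:ℝ)-2)) * (ricci g ginv x ![a,d] * g x c b)
      + (1/((n:ℝ)-2)) * (ricci g ginv x ![b,c] * g x d a)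
      - (1/((n:ℝ)-2)) * (ricci g ginv x ![b,d] * g x c a)
      + (scalarCurv g ginv x / (((n:ℝ)-1) * ((n:ℝ)-2))) * (g x a c * g x d b)
      - (scalarCurv g ginv x / (((n:ℝ)-1) * ((n:ℝ)-2))) * (g x a d * g x c b) := by
  unfold weyl
  simp only [Matrix.cons_val_zero, Matrix.cons_val_one, Matrix.head_cons,
    Matrix.cons_val_two, Matrix.tail_cons, Matrix.cons_val_three]
  rw [hg.1 x b d, hg.1 x b c]
  ring

omit hg in
theorem slot_split (c1 c2 : ℝ) (R F A1 A2 A3 A4 B1 B2 : Fin n → ℝ) :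
    (∑ ρ, R ρ * (F ρ - c1 * A1 ρ + c1 * A2 ρ + c1 * A3 ρ - c1 * A4 ρ + c2 * B1 ρ - c2 * B2 ρ))
    = (∑ ρ, R ρ * F ρ) - c1 * (∑ ρ, R ρ * A1 ρ) + c1 * (∑ ρ, R ρ * A2 ρ)
      + c1 * (∑ ρ, R ρ * A3 ρ) - c1 * (∑ ρ, R ρ * A4 ρ)
      + c2 * (∑ ρ, R ρ * B1 ρ) - c2 * (∑ ρ, R ρ * B2 ρ) := by
  simp only [Finset.mul_sum, ← Finset.sum_sub_distrib, ← Finset.sum_add_distrib]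
  exact Finset.sum_congr rfl fun ρ _ => by ring

end Aux

/-- In any `n`-dimensional semi-symmetric semi-Riemannian manifold of
any signature (`n > 2`; in particular in any 2-symmetric one), the Riemann and Weyl
tensors satisfy
`R^ρ_{αλμ} C_{ρβγδ} + R^ρ_{βλμ} C_{αργδ} + R^ρ_{γλμ} C_{αβρδ} + R^ρ_{δλμ} C_{αβγρ} = 0`. -/
theorem stmt9 {n : ℕ} (hn : 2 < n) (g ginv : Pt n → Fin n → Fin n → ℝ)
    (hg : IsMetric g ginv) (hss : SemiSymmetric g ginv) :
    ∀ (x : Pt n) (lam μ α β γ δ : Fin n),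
      (∑ ρ, riemannUp g ginv x ρ α lam μ * weyl g ginv x ![ρ, β, γ, δ]) +
      (∑ ρ, riemannUp g ginv x ρ β lam μ * weyl g ginv x ![α, ρ, γ, δ]) +
      (∑ ρ, riemannUp g ginv x ρ γ lam μ * weyl g ginv x ![α, β, ρ, δ]) +
      (∑ ρ, riemannUp g ginv x ρ δ lam μ * weyl g ginv x ![α, β, γ, ρ]) = 0 := by
  intro x lam μ α β γ δ
  have hA : ∀ x lam μ a b,
      (∑ ρ, riemannUp g ginv x ρ a lam μ * (fun y u v => ricci g ginv y ![u,v]) x ρ b) +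
      (∑ ρ, riemannUp g ginv x ρ b lam μ * (fun y u v => ricci g ginv y ![u,v]) x a ρ) = 0 :=
    fun x lam μ a b => Aux.op2Ric hg hss x lam μ a b
  have hB : ∀ x lam μ a b,
      (∑ ρ, riemannUp g ginv x ρ a lam μ * g x ρ b) +
      (∑ ρ, riemannUp g ginv x ρ b lam μ * g x a ρ) = 0 :=
    fun x lam μ a b => Aux.op2g hg x lam μ a b
  have H0 := Aux.op4R hg hss x lam μ α β γ δ
  have H1 := Aux.op_prod (fun y u v => ricci g ginv y ![u,v]) g hA hB x lam μ α β γ δ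
  have H2 := Aux.op_prod (fun y u v => ricci g ginv y ![u,v]) g hA hB x lam μ α β δ γ
  have H3 := Aux.op_prod (fun y u v => ricci g ginv y ![u,v]) g hA hB x lam μ β α γ δ
  have H4 := Aux.op_prod (fun y u v => ricci g ginv y ![u,v]) g hA hB x lam μ β α δ γ
  have H5 := Aux.op_prod g g hB hB x lam μ α β γ δ
  have H6 := Aux.op_prod g g hB hB x lam μ α β δ γ
  simp only [Aux.weyl_eval hg]
  rw [Aux.slot_split, Aux.slot_split, Aux.slot_split, Aux.slot_split]
  linear_combination H0 - (1/((n:ℝ)-2)) * H1 + (1/((n:ℝ)-2)) * H2 + (1/((n:ℝ)-2)) * H3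
    - (1/((n:ℝ)-2)) * H4
    + (scalarCurv g ginv x / (((n:ℝ)-1) * ((n:ℝ)-2))) * H5
    - (scalarCurv g ginv x / (((n:ℝ)-1) * ((n:ℝ)-2))) * H6
end
end
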